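/- arXiv:1809.01205 — 4 statements merged into one kernel-verified Lean document; each statement's English description precedes it below -/
import Mathlib

section
/- Assume the standing hypotheses. If $C_{\phi,w}^k$ is densely defined for some integer $k\ge 2$, then for every $\alpha\in(0,1]$ the weighted composition operator $C_{\phi,w_\alpha}$ (hence the closure of $\Delta_\alpha(C_{\phi,w})$) is densely defined. -/
open MeasureTheory ENNReal NNReal Filter Topology

variable {X : Type*} [MeasurableSpace X]

/-- The measure `μ_w` with density `|w|²` with respect to `μ`. -/
noncomputable def wcMeasure (μ : Measure X) (w : X → ℂ) : Measure X :=
  μ.withDensity fun x => (‖w x‖₊ : ℝ≥0∞) ^ 2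

/-- The Radon–Nikodym derivative `h_{φ,w} = d(μ_w ∘ φ⁻¹)/dμ`. -/
noncomputable def wcDeriv (μ : Measure X) (w : X → ℂ) (φ : X → X) : X → ℝ≥0∞ :=
  ((wcMeasure μ w).map φ).rnDeriv μ

/-- The modified weight `w_α = w · (h_{φ,w}/(h_{φ,w}∘φ))^{α/2}` (interpreted a.e.). -/
noncomputable def wcAlpha (μ : Measure X) (w : X → ℂ) (φ : X → X) (α : ℝ) : X → ℂ :=
  fun x => w x * (((wcDeriv μ w φ x / wcDeriv μ w φ (φ x)) ^ (α / 2)).toReal : ℂ)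

/-- `E` is (a version of) the conditional expectation of the nonnegative function `f`
with respect to the σ-algebra `φ⁻¹(𝒜)` and the measure `ν`. -/
def IsCondExp (φ : X → X) (ν : Measure X) (f E : X → ℝ≥0∞) : Prop :=
  Measurable[MeasurableSpace.comap φ inferInstance] E ∧
    ∀ s : Set X, MeasurableSet s → ∫⁻ x in φ ⁻¹' s, E x ∂ν = ∫⁻ x in φ ⁻¹' s, f x ∂ν

/-- `g = E ∘ φ⁻¹`: the measurable function with `g ∘ φ = E` a.e. `[ν]`,
vanishing a.e. `[μ]` on the set where `h = 0`. -/
def IsQuot (φ : X → X) (μ ν : Measure X) (h : X → ℝ≥0∞) (E g : X → ℝ≥0∞) : Prop :=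
  Measurable g ∧ (∀ᵐ x ∂ν, g (φ x) = E x) ∧ (∀ᵐ x ∂μ, h x = 0 → g x = 0)

/-- `E` is (a version of) the conditional expectation of the complex function `f`
with respect to the σ-algebra `φ⁻¹(𝒜)` and the measure `ν`. -/
def IsCondExpC (φ : X → X) (ν : Measure X) (f E : X → ℂ) : Prop :=
  Measurable[MeasurableSpace.comap φ inferInstance] E ∧
    ∀ s : Set X, MeasurableSet s → ν (φ ⁻¹' s) < ⊤ →
      ∫ x in φ ⁻¹' s, E x ∂ν = ∫ x in φ ⁻¹' s, f x ∂ν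

/-- `f_w = χ_{{w ≠ 0}} f / w`. -/
noncomputable def fw (w f : X → ℂ) : X → ℂ := fun x => if w x = 0 then 0 else f x / w x

section Aux

/-! ### Generic helpers -/

private lemma lintegral_sq_eq (g : X → ℂ) (ρ : Measure X) :
    ∫⁻ x, (‖g x‖₊ : ℝ≥0∞) ^ 2 ∂ρ = eLpNorm g 2 ρ ^ 2 := by
  rw [eLpNorm_eq_lintegral_rpow_enorm_toReal two_ne_zero ENNReal.ofNat_ne_top]
  rw [← ENNReal.rpow_natCast _ 2, ← ENNReal.rpow_mul]
  have h2 : ((2 : ℝ≥0∞)).toReal = 2 := by norm_num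
  rw [h2]
  rw [one_div]
  have h3 : (2:ℝ)⁻¹ * ((2:ℕ):ℝ) = 1 := by norm_num
  rw [h3, ENNReal.rpow_one]
  refine lintegral_congr fun x => ?_
  rw [← ENNReal.rpow_natCast]
  norm_num
  rfl

private lemma memLp_two_iff (g : X → ℂ) (ρ : Measure X) :
    MemLp g 2 ρ ↔ AEStronglyMeasurable g ρ ∧ ∫⁻ x, (‖g x‖₊ : ℝ≥0∞) ^ 2 ∂ρ < ⊤ := by
  rw [MemLp, lintegral_sq_eq]
  refine and_congr Iff.rfl ?_
  constructor
  · intro hlt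
    exact ENNReal.pow_lt_top hlt
  · intro hlt
    by_contra hc
    rw [lt_top_iff_ne_top, not_ne_iff] at hc
    rw [hc, ENNReal.top_pow (by norm_num)] at hlt
    exact lt_irrefl _ hlt

private lemma lintegral_comp_weight' {μ : Measure X} {d : X → ℝ≥0∞} (hd : Measurable d)
    {φ : X → X} (hφ : Measurable φ) {u : X → ℝ≥0∞} (hu : Measurable u) :
    ∫⁻ x, u x ∂((μ.withDensity d).map φ) = ∫⁻ x, d x * u (φ x) ∂μ := by
  rw [lintegral_map hu hφ]
  exact lintegral_withDensity_eq_lintegral_mul μ hd (hu.comp hφ)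

private lemma aeFinite_of_dense (μ : Measure X) [SigmaFinite μ] (H : X → ℝ≥0∞)
    (hH : Measurable H) (S : Set (Lp ℂ 2 μ)) (hd : Dense S)
    (hb : ∀ f ∈ S, ∫⁻ x, (‖(f : X → ℂ) x‖₊ : ℝ≥0∞) ^ 2 * H x ∂μ < ⊤) :
    ∀ᵐ x ∂μ, H x < ⊤ := by
  by_contra hc
  rw [ae_iff] at hc
  have hAmeas : MeasurableSet {x | ¬ H x < ⊤} := by
    have : {x | ¬ H x < ⊤} = H ⁻¹' {⊤} := by
      ext x; simp [lt_top_iff_ne_top]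
    rw [this]; exact hH (measurableSet_singleton _)
  obtain ⟨A, hAm, hAsub, hApos, hAfin⟩ :=
    Measure.exists_subset_measure_lt_top hAmeas (pos_iff_ne_zero.mpr hc)
  set G : Lp ℂ 2 μ := indicatorConstLp 2 hAm hAfin.ne (1 : ℂ) with hG
  have hεpos : 0 < ((μ A) ^ (1 / (2 : ℝ≥0∞).toReal)).toReal := by
    apply ENNReal.toReal_pos
    · simp only [ne_eq, ENNReal.rpow_eq_zero_iff, not_or]
      constructor
      · rintro ⟨h0, -⟩; exact hApos.ne' h0
      · rintro ⟨htop, -⟩; exact hAfin.ne htop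
    · exact ENNReal.rpow_ne_top_of_nonneg (by norm_num) hAfin.ne
  obtain ⟨f, hfS, hdist⟩ := hd.exists_dist_lt G hεpos
  have hfin := hb f hfS
  have haem : AEMeasurable (fun x => (‖(f : X → ℂ) x‖₊ : ℝ≥0∞) ^ 2 * H x) μ :=
    (((Lp.aestronglyMeasurable f).aemeasurable.nnnorm.coe_nnreal_ennreal).pow_const 2).mul hH.aemeasurable
  have hlt := ae_lt_top' haem hfin.ne
  have hf0 : ∀ᵐ x ∂(μ.restrict A), (f : X → ℂ) x = 0 := by
    filter_upwards [ae_restrict_of_ae hlt, ae_restrict_mem hAm] with x hx hxA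
    have hHx : H x = ⊤ := by
      have := hAsub hxA
      simpa [lt_top_iff_ne_top] using this
    by_contra hne
    rw [hHx, ENNReal.mul_top (by simp [hne])] at hx
    exact lt_irrefl _ hx
  have hr0 : μ.restrict A ≠ 0 := by
    simp only [ne_eq, Measure.restrict_eq_zero]
    exact hApos.ne'
  have hkey : (μ A) ^ (1 / (2 : ℝ≥0∞).toReal) ≤ eLpNorm (⇑G - ⇑f) 2 μ := by
    have h1 : eLpNorm (fun _ : X => (1 : ℂ)) 2 (μ.restrict A)
        = (μ A) ^ (1 / (2 : ℝ≥0∞).toReal) := by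
      rw [eLpNorm_const _ two_ne_zero hr0]
      simp [Measure.restrict_apply_univ]
    have h2 : eLpNorm (⇑G - ⇑f) 2 (μ.restrict A)
        = eLpNorm (fun _ : X => (1 : ℂ)) 2 (μ.restrict A) := by
      refine eLpNorm_congr_ae ?_
      filter_upwards [ae_restrict_of_ae (indicatorConstLp_coeFn (p := 2)
        (hs := hAm) (hμs := hAfin.ne) (c := (1:ℂ))), hf0, ae_restrict_mem hAm]
        with x hGx h0x hxA
      simp [Pi.sub_apply, hG, hGx, h0x, Set.indicator_of_mem hxA]
    calc (μ A) ^ (1 / (2 : ℝ≥0∞).toReal) = eLpNorm (⇑G - ⇑f) 2 (μ.restrict A) := by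
          rw [h2, h1]
      _ ≤ eLpNorm (⇑G - ⇑f) 2 μ := eLpNorm_mono_measure _ Measure.restrict_le_self
  have hdge : ((μ A) ^ (1 / (2 : ℝ≥0∞).toReal)).toReal ≤ dist G f := by
    rw [Lp.dist_def]
    exact ENNReal.toReal_mono (by
      have := Lp.eLpNorm_lt_top (G - f)
      refine ne_of_lt (lt_of_le_of_lt (le_of_eq (eLpNorm_congr_ae ?_)) this)
      exact (Lp.coeFn_sub G f).symm) hkey
  linarith

/-! ### Second-order objects -/

noncomputable def wcTau (μ : Measure X) (w : X → ℂ) (φ : X → X) : Measure X :=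
  ((wcMeasure μ w).withDensity (wcDeriv μ w φ)).map φ

noncomputable def wcDeriv2 (μ : Measure X) (w : X → ℂ) (φ : X → X) : X → ℝ≥0∞ :=
  (wcTau μ w φ).rnDeriv μ

noncomputable def wcQ (μ : Measure X) (w : X → ℂ) (φ : X → X) : X → ℝ≥0∞ :=
  fun x => if wcDeriv μ w φ x = 0 then 0 else (wcDeriv μ w φ x)⁻¹

noncomputable def wcH (μ : Measure X) (w : X → ℂ) (φ : X → X) : X → ℝ≥0∞ :=
  fun x => wcDeriv μ w φ x + wcQ μ w φ x * wcDeriv2 μ w φ x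

variable {μ : Measure X} {w : X → ℂ} {φ : X → X}

private lemma measurable_wcDeriv : Measurable (wcDeriv μ w φ) :=
  Measure.measurable_rnDeriv _ _

private lemma measurable_wcDeriv2 : Measurable (wcDeriv2 μ w φ) :=
  Measure.measurable_rnDeriv _ _

private lemma measurable_wcQ : Measurable (wcQ μ w φ) := by
  unfold wcQ
  exact Measurable.ite (measurable_wcDeriv (measurableSet_singleton 0))
    measurable_const measurable_wcDeriv.inv

private lemma measurable_wcH : Measurable (wcH μ w φ) := by
  unfold wcH
  exact measurable_wcDeriv.add (measurable_wcQ.mul measurable_wcDeriv2)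

private lemma measurable_wcAlpha (hw : Measurable w) (hφ : Measurable φ) (α : ℝ) :
    Measurable (wcAlpha μ w φ α) := by
  unfold wcAlpha
  refine hw.mul ?_
  refine Complex.measurable_ofReal.comp (ENNReal.measurable_toReal.comp ?_)
  exact (ENNReal.continuous_rpow_const.measurable).comp
    (measurable_wcDeriv.div (measurable_wcDeriv.comp hφ))

private lemma wcAlpha_sq_le {α : ℝ} (hα0 : 0 < α) (hα1 : α ≤ 1) (x : X) :
    (‖wcAlpha μ w φ α x‖₊ : ℝ≥0∞) ^ 2 ≤
      (‖w x‖₊ : ℝ≥0∞) ^ 2 * (1 + wcDeriv μ w φ x * wcQ μ w φ (φ x)) := by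
  have hαh : 0 < α / 2 := by positivity
  unfold wcAlpha
  rw [nnnorm_mul, Complex.nnnorm_real]
  push_cast
  rw [mul_pow]
  refine mul_le_mul_right ?_ _
  have hnn : ∀ c : ℝ≥0∞, (‖c.toReal‖₊ : ℝ≥0∞) = (c.toNNReal : ℝ≥0∞) := by
    intro c
    congr 1
    rw [← Real.toNNReal_eq_nnnorm_of_nonneg ENNReal.toReal_nonneg, ENNReal.toReal,
      Real.toNNReal_coe]
  rw [hnn]
  set a := wcDeriv μ w φ x with ha
  set b := wcDeriv μ w φ (φ x) with hb
  by_cases hbz : b = 0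
  · by_cases haz : a = 0
    · rw [haz, hbz]
      simp [ENNReal.zero_div, ENNReal.zero_rpow_of_pos hαh]
    · rw [hbz, ENNReal.div_zero haz, ENNReal.top_rpow_of_pos hαh]
      simp
  · have hq : wcQ μ w φ (φ x) = b⁻¹ := by
      unfold wcQ; rw [← hb, if_neg hbz]
    rw [hq]
    rw [← div_eq_mul_inv]
    by_cases hz : a / b = ⊤
    · rw [hz, ENNReal.top_rpow_of_pos hαh]
      simp
    · have hfin : (a / b) ^ (α / 2) ≠ ⊤ := ENNReal.rpow_ne_top_of_nonneg hαh.le hz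
      rw [ENNReal.coe_toNNReal hfin]
      have hsq : ((a / b) ^ (α / 2)) ^ 2 = (a / b) ^ α := by
        rw [← ENNReal.rpow_natCast ((a / b) ^ (α / 2)) 2, ← ENNReal.rpow_mul]
        norm_num
      rw [hsq]
      rcases le_total (a / b) 1 with hle | hge
      · exact le_trans (ENNReal.rpow_le_one hle hα0.le) le_self_add
      · calc (a / b) ^ α ≤ (a / b) ^ (1 : ℝ) :=
              ENNReal.rpow_le_rpow_of_exponent_le hge hα1
          _ = a / b := ENNReal.rpow_one _
          _ ≤ 1 + a / b := le_add_self

private lemma sfinite_wcMeasure [SigmaFinite μ] : SFinite (wcMeasure μ w) := by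
  unfold wcMeasure; infer_instance

private lemma wcMap_eq [SigmaFinite μ] (habs : (wcMeasure μ w).map φ ≪ μ) :
    (wcMeasure μ w).map φ = μ.withDensity (wcDeriv μ w φ) := by
  haveI := sfinite_wcMeasure (μ := μ) (w := w)
  exact (Measure.withDensity_rnDeriv_eq _ _ habs).symm

private lemma wcTau_abs (hφ : Measurable φ) (habs : (wcMeasure μ w).map φ ≪ μ) :
    wcTau μ w φ ≪ μ :=
  ((withDensity_absolutelyContinuous (wcMeasure μ w) (wcDeriv μ w φ)).map hφ).trans habs

private lemma wcTau_eq [SigmaFinite μ] (hφ : Measurable φ)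
    (habs : (wcMeasure μ w).map φ ≪ μ) :
    wcTau μ w φ = μ.withDensity (wcDeriv2 μ w φ) := by
  haveI := sfinite_wcMeasure (μ := μ) (w := w)
  haveI : SFinite (wcTau μ w φ) := by unfold wcTau; infer_instance
  exact (Measure.withDensity_rnDeriv_eq _ _ (wcTau_abs hφ habs)).symm

private lemma lint_nu (hw : Measurable w) (hφ : Measurable φ) {u : X → ℝ≥0∞}
    (hu : Measurable u) :
    ∫⁻ x, (‖w x‖₊ : ℝ≥0∞) ^ 2 * u (φ x) ∂μ = ∫⁻ x, u x ∂((wcMeasure μ w).map φ) :=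
  (lintegral_comp_weight' (hw.nnnorm.coe_nnreal_ennreal.pow_const 2) hφ hu).symm

private lemma lint_tau (hw : Measurable w) (hφ : Measurable φ) {u : X → ℝ≥0∞}
    (hu : Measurable u) :
    ∫⁻ x, u x ∂(wcTau μ w φ)
      = ∫⁻ x, (‖w x‖₊ : ℝ≥0∞) ^ 2 * (wcDeriv μ w φ x * u (φ x)) ∂μ := by
  unfold wcTau
  rw [lintegral_comp_weight' (d := wcDeriv μ w φ) (Measure.measurable_rnDeriv _ _) hφ hu]
  exact lintegral_withDensity_eq_lintegral_mul μ (hw.nnnorm.coe_nnreal_ennreal.pow_const 2)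
    (measurable_wcDeriv.mul (hu.comp hφ))

private lemma lint_withDensity {d : X → ℝ≥0∞} (hd : Measurable d) {u : X → ℝ≥0∞}
    (hu : Measurable u) :
    ∫⁻ x, u x ∂(μ.withDensity d) = ∫⁻ x, d x * u x ∂μ :=
  lintegral_withDensity_eq_lintegral_mul μ hd hu

/-- the key domination at the level of integrals -/
private lemma wc_keyIneq [SigmaFinite μ] (hw : Measurable w) (hφ : Measurable φ)
    (habs : (wcMeasure μ w).map φ ≪ μ) {α : ℝ} (hα0 : 0 < α) (hα1 : α ≤ 1)
    {u : X → ℝ≥0∞} (hu : Measurable u) :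
    ∫⁻ x, (‖wcAlpha μ w φ α x‖₊ : ℝ≥0∞) ^ 2 * u (φ x) ∂μ
      ≤ ∫⁻ x, u x * wcH μ w φ x ∂μ := by
  have hqu : Measurable fun y => wcQ μ w φ y * u y := measurable_wcQ.mul hu
  calc ∫⁻ x, (‖wcAlpha μ w φ α x‖₊ : ℝ≥0∞) ^ 2 * u (φ x) ∂μ
      ≤ ∫⁻ x, (‖w x‖₊ : ℝ≥0∞) ^ 2 * (1 + wcDeriv μ w φ x * wcQ μ w φ (φ x)) * u (φ x) ∂μ :=
        lintegral_mono fun x => mul_le_mul_left (wcAlpha_sq_le hα0 hα1 x) _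
    _ = ∫⁻ x, ((‖w x‖₊ : ℝ≥0∞) ^ 2 * u (φ x)
          + (‖w x‖₊ : ℝ≥0∞) ^ 2 * (wcDeriv μ w φ x * (wcQ μ w φ (φ x) * u (φ x)))) ∂μ := by
        refine lintegral_congr fun x => ?_
        ring
    _ = (∫⁻ x, (‖w x‖₊ : ℝ≥0∞) ^ 2 * u (φ x) ∂μ)
          + ∫⁻ x, (‖w x‖₊ : ℝ≥0∞) ^ 2 * (wcDeriv μ w φ x * (wcQ μ w φ (φ x) * u (φ x))) ∂μ :=
        lintegral_add_left ((hw.nnnorm.coe_nnreal_ennreal.pow_const 2).mul (hu.comp hφ)) _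
    _ = (∫⁻ x, wcDeriv μ w φ x * u x ∂μ) + ∫⁻ x, wcDeriv2 μ w φ x * (wcQ μ w φ x * u x) ∂μ := by
        congr 1
        · rw [lint_nu hw hφ hu, wcMap_eq habs, lint_withDensity measurable_wcDeriv hu]
        · rw [show (∫⁻ x, (‖w x‖₊ : ℝ≥0∞) ^ 2
              * (wcDeriv μ w φ x * (wcQ μ w φ (φ x) * u (φ x))) ∂μ)
              = ∫⁻ x, wcQ μ w φ x * u x ∂(wcTau μ w φ) from (lint_tau hw hφ hqu).symm,
            wcTau_eq hφ habs, lint_withDensity measurable_wcDeriv2 hqu]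
    _ = ∫⁻ x, u x * wcH μ w φ x ∂μ := by
        rw [← lintegral_add_left (f := fun x => wcDeriv μ w φ x * u x) (measurable_wcDeriv.mul hu)]
        refine lintegral_congr fun x => ?_
        unfold wcH
        ring

/-- `w` vanishes a.e. on preimages of `μ`-null sets. -/
private lemma wc_null (hw : Measurable w) (hφ : Measurable φ)
    (habs : (wcMeasure μ w).map φ ≪ μ) {N : Set X} (hN : MeasurableSet N)
    (hN0 : μ N = 0) : ∀ᵐ x ∂μ, φ x ∈ N → w x = 0 := by
  have h1 : (μ.withDensity fun x => (‖w x‖₊ : ℝ≥0∞) ^ 2) (φ ⁻¹' N) = 0 := by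
    have : (wcMeasure μ w) (φ ⁻¹' N) = 0 := by
      rw [← Measure.map_apply hφ hN]; exact habs hN0
    exact this
  rw [withDensity_apply_eq_zero (hw.nnnorm.coe_nnreal_ennreal.pow_const 2)] at h1
  have h2 := measure_eq_zero_iff_ae_notMem.mp h1
  filter_upwards [h2] with x hx hmem
  by_contra hw0
  exact hx ⟨by simp [pow_eq_zero_iff, hw0], hmem⟩

/-- `w_α` vanishes a.e. on preimages of `μ`-null sets. -/
private lemma wcAlpha_null [SigmaFinite μ] (hw : Measurable w) (hφ : Measurable φ)
    (habs : (wcMeasure μ w).map φ ≪ μ) {α : ℝ} (hα0 : 0 < α) (hα1 : α ≤ 1)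
    {N : Set X} (hN : MeasurableSet N) (hN0 : μ N = 0) :
    ∀ᵐ x ∂μ, φ x ∈ N → wcAlpha μ w φ α x = 0 := by
  have hu : Measurable (N.indicator (1 : X → ℝ≥0∞)) := measurable_one.indicator hN
  have hkey := wc_keyIneq hw hφ habs hα0 hα1 hu
  have hz : ∫⁻ x, N.indicator 1 x * wcH μ w φ x ∂μ = 0 := by
    have heq : ∀ x, N.indicator (1 : X → ℝ≥0∞) x * wcH μ w φ x
        = N.indicator (wcH μ w φ) x := by
      intro x; by_cases hx : x ∈ N <;> simp [hx]
    rw [lintegral_congr heq, lintegral_indicator hN _]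
    exact setLIntegral_measure_zero N _ hN0
  have h0 : ∫⁻ x, (‖wcAlpha μ w φ α x‖₊ : ℝ≥0∞) ^ 2 * N.indicator 1 (φ x) ∂μ = 0 :=
    le_antisymm (by rw [← hz]; exact hkey) zero_le
  have hmeas : Measurable fun x =>
      (‖wcAlpha μ w φ α x‖₊ : ℝ≥0∞) ^ 2 * N.indicator 1 (φ x) :=
    (((measurable_wcAlpha hw hφ α).nnnorm.coe_nnreal_ennreal).pow_const 2).mul (hu.comp hφ)
  have := (lintegral_eq_zero_iff hmeas).1 h0
  filter_upwards [this] with x hx hmem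
  have : (‖wcAlpha μ w φ α x‖₊ : ℝ≥0∞) ^ 2 * N.indicator 1 (φ x) = 0 := hx
  rw [Set.indicator_of_mem hmem] at this
  simp only [Pi.one_apply, mul_one] at this
  simpa [pow_eq_zero_iff] using this

end Aux

/-- If the power `C_{φ,w}^k` (`k ≥ 2`) is densely defined, then
`C_{φ,w_α}` (the closure of `Δ_α(C_{φ,w})`) is densely defined, for every `α ∈ (0,1]`. -/
theorem aluthge_wco_power_denselyDefined
    (μ : Measure X) [SigmaFinite μ] (w : X → ℂ) (φ : X → X)
    (hw : Measurable w) (hφ : Measurable φ)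
    (habs : (wcMeasure μ w).map φ ≪ μ)
    (k : ℕ) (hk : 2 ≤ k)
    (hdense : Dense {f : Lp ℂ 2 μ |
      ∀ j ≤ k, MemLp ((fun g : X → ℂ => fun x => w x * g (φ x))^[j] (f : X → ℂ)) 2 μ})
    (α : ℝ) (hα : α ∈ Set.Ioc (0 : ℝ) 1) :
    Dense {f : Lp ℂ 2 μ |
      MemLp (fun x => wcAlpha μ w φ α x * (f : X → ℂ) (φ x)) 2 μ} := by
  obtain ⟨hα0, hα1⟩ := hα
  have hone : (1 : ℕ) ≤ k := le_trans (by norm_num) hk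
  -- Step 1: `h = wcDeriv` is a.e. finite.
  have finh : ∀ᵐ x ∂μ, wcDeriv μ w φ x < ⊤ := by
    refine aeFinite_of_dense μ _ measurable_wcDeriv _ hdense ?_
    intro f hf
    have hmem := hf 1 hone
    rw [Function.iterate_one] at hmem
    have hFa := Lp.aestronglyMeasurable f
    have hf'meas : Measurable (hFa.mk ⇑f) := hFa.stronglyMeasurable_mk.measurable
    set f' : X → ℂ := hFa.mk ⇑f with hf'def
    have hae : ⇑f =ᵐ[μ] f' := hFa.ae_eq_mk
    obtain ⟨N, hNsub, hNm, hN0⟩ := exists_measurable_superset_of_null (ae_iff.1 hae)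
    have hu' : Measurable fun x => (‖f' x‖₊ : ℝ≥0∞) ^ 2 := hf'meas.nnnorm.coe_nnreal_ennreal.pow_const 2
    calc ∫⁻ x, (‖(f : X → ℂ) x‖₊ : ℝ≥0∞) ^ 2 * wcDeriv μ w φ x ∂μ
        = ∫⁻ x, (‖f' x‖₊ : ℝ≥0∞) ^ 2 * wcDeriv μ w φ x ∂μ := by
          refine lintegral_congr_ae ?_
          filter_upwards [hae] with x hx
          rw [hx]
      _ = ∫⁻ x, wcDeriv μ w φ x * (‖f' x‖₊ : ℝ≥0∞) ^ 2 ∂μ :=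
          lintegral_congr fun x => mul_comm _ _
      _ = ∫⁻ x, (‖f' x‖₊ : ℝ≥0∞) ^ 2 ∂(μ.withDensity (wcDeriv μ w φ)) :=
          (lint_withDensity measurable_wcDeriv hu').symm
      _ = ∫⁻ x, (‖f' x‖₊ : ℝ≥0∞) ^ 2 ∂((wcMeasure μ w).map φ) := by rw [← wcMap_eq habs]
      _ = ∫⁻ x, (‖w x‖₊ : ℝ≥0∞) ^ 2 * (‖f' (φ x)‖₊ : ℝ≥0∞) ^ 2 ∂μ := (lint_nu hw hφ hu').symm
      _ = ∫⁻ x, (‖w x * f' (φ x)‖₊ : ℝ≥0∞) ^ 2 ∂μ := by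
          refine lintegral_congr fun x => ?_
          simp only [nnnorm_mul, ENNReal.coe_mul, mul_pow]; all_goals ring
      _ = ∫⁻ x, (‖w x * (f : X → ℂ) (φ x)‖₊ : ℝ≥0∞) ^ 2 ∂μ := by
          refine lintegral_congr_ae ?_
          filter_upwards [wc_null hw hφ habs hNm hN0] with x hx
          by_cases hmem2 : φ x ∈ N
          · rw [hx hmem2]; simp
          · have heq : (f : X → ℂ) (φ x) = f' (φ x) := by
              by_contra hne
              exact hmem2 (hNsub hne)
            rw [heq]
      _ < ⊤ := ((memLp_two_iff _ _).1 hmem).2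
  -- Step 2: `h₂ = wcDeriv2` is a.e. finite.
  have finh2 : ∀ᵐ x ∂μ, wcDeriv2 μ w φ x < ⊤ := by
    refine aeFinite_of_dense μ _ measurable_wcDeriv2 _ hdense ?_
    intro f hf
    have hmem := hf 2 hk
    have hit2 : ((fun g : X → ℂ => fun x => w x * g (φ x))^[2] (f : X → ℂ))
        = fun x => w x * (w (φ x) * (f : X → ℂ) (φ (φ x))) := rfl
    rw [hit2] at hmem
    have hFa := Lp.aestronglyMeasurable f
    have hf'meas : Measurable (hFa.mk ⇑f) := hFa.stronglyMeasurable_mk.measurable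
    set f' : X → ℂ := hFa.mk ⇑f with hf'def
    have hae : ⇑f =ᵐ[μ] f' := hFa.ae_eq_mk
    obtain ⟨N, hNsub, hNm, hN0⟩ := exists_measurable_superset_of_null (ae_iff.1 hae)
    have hu' : Measurable fun x => (‖f' x‖₊ : ℝ≥0∞) ^ 2 := hf'meas.nnnorm.coe_nnreal_ennreal.pow_const 2
    have hCsq : Measurable fun x => (‖w x * f' (φ x)‖₊ : ℝ≥0∞) ^ 2 :=
      ((hw.mul (hf'meas.comp hφ)).nnnorm.coe_nnreal_ennreal).pow_const 2
    -- the doubly-composed null set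
    have hN'm : MeasurableSet (φ ⁻¹' N ∩ {x | w x ≠ 0}) :=
      (hφ hNm).inter (hw (measurableSet_singleton 0)).compl
    have hN'0 : μ (φ ⁻¹' N ∩ {x | w x ≠ 0}) = 0 := by
      rw [measure_eq_zero_iff_ae_notMem]
      filter_upwards [wc_null hw hφ habs hNm hN0] with x hx
      rintro ⟨hx1, hx2⟩
      exact hx2 (hx hx1)
    calc ∫⁻ x, (‖(f : X → ℂ) x‖₊ : ℝ≥0∞) ^ 2 * wcDeriv2 μ w φ x ∂μ
        = ∫⁻ x, (‖f' x‖₊ : ℝ≥0∞) ^ 2 * wcDeriv2 μ w φ x ∂μ := by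
          refine lintegral_congr_ae ?_
          filter_upwards [hae] with x hx
          rw [hx]
      _ = ∫⁻ x, wcDeriv2 μ w φ x * (‖f' x‖₊ : ℝ≥0∞) ^ 2 ∂μ :=
          lintegral_congr fun x => mul_comm _ _
      _ = ∫⁻ x, (‖f' x‖₊ : ℝ≥0∞) ^ 2 ∂(μ.withDensity (wcDeriv2 μ w φ)) :=
          (lint_withDensity measurable_wcDeriv2 hu').symm
      _ = ∫⁻ x, (‖f' x‖₊ : ℝ≥0∞) ^ 2 ∂(wcTau μ w φ) := by rw [← wcTau_eq hφ habs]
      _ = ∫⁻ x, (‖w x‖₊ : ℝ≥0∞) ^ 2 * (wcDeriv μ w φ x * (‖f' (φ x)‖₊ : ℝ≥0∞) ^ 2) ∂μ :=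
          lint_tau hw hφ hu'
      _ = ∫⁻ x, wcDeriv μ w φ x * (‖w x * f' (φ x)‖₊ : ℝ≥0∞) ^ 2 ∂μ := by
          refine lintegral_congr fun x => ?_
          simp only [nnnorm_mul, ENNReal.coe_mul, mul_pow]; all_goals ring
      _ = ∫⁻ x, (‖w x * f' (φ x)‖₊ : ℝ≥0∞) ^ 2 ∂(μ.withDensity (wcDeriv μ w φ)) :=
          (lint_withDensity measurable_wcDeriv hCsq).symm
      _ = ∫⁻ x, (‖w x * f' (φ x)‖₊ : ℝ≥0∞) ^ 2 ∂((wcMeasure μ w).map φ) := by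
          rw [← wcMap_eq habs]
      _ = ∫⁻ x, (‖w x‖₊ : ℝ≥0∞) ^ 2 * (‖w (φ x) * f' (φ (φ x))‖₊ : ℝ≥0∞) ^ 2 ∂μ :=
          (lint_nu hw hφ hCsq).symm
      _ = ∫⁻ x, (‖w x * (w (φ x) * f' (φ (φ x)))‖₊ : ℝ≥0∞) ^ 2 ∂μ := by
          refine lintegral_congr fun x => ?_
          simp only [nnnorm_mul, ENNReal.coe_mul, mul_pow]; all_goals ring
      _ = ∫⁻ x, (‖w x * (w (φ x) * (f : X → ℂ) (φ (φ x)))‖₊ : ℝ≥0∞) ^ 2 ∂μ := by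
          refine lintegral_congr_ae ?_
          filter_upwards [wc_null hw hφ habs hN'm hN'0] with x hx
          by_cases hNN : φ (φ x) ∈ N
          · by_cases hw2 : w (φ x) = 0
            · rw [hw2]; simp
            · have : φ x ∈ φ ⁻¹' N ∩ {x | w x ≠ 0} := ⟨hNN, hw2⟩
              rw [hx this]; simp
          · have heq : f' (φ (φ x)) = (f : X → ℂ) (φ (φ x)) := by
              by_contra hne
              exact hNN (hNsub fun h => hne h.symm)
            rw [heq]
      _ < ⊤ := ((memLp_two_iff _ _).1 hmem).2
  -- Step 3: `wcH` is a.e. finite.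
  have hHfin : ∀ᵐ x ∂μ, wcH μ w φ x < ⊤ := by
    filter_upwards [finh, finh2] with x h1 h2
    unfold wcH wcQ
    refine ENNReal.add_lt_top.mpr ⟨h1, ?_⟩
    by_cases hz : wcDeriv μ w φ x = 0
    · simp [hz]
    · rw [if_neg hz]
      exact ENNReal.mul_lt_top (ENNReal.inv_lt_top.mpr (pos_iff_ne_zero.mpr hz)) h2
  -- Step 4: density via truncation to `{wcH ≤ n}`.
  intro F
  have hFa := Lp.aestronglyMeasurable F
  have hf'meas : Measurable (hFa.mk ⇑F) := hFa.stronglyMeasurable_mk.measurable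
  set f' : X → ℂ := hFa.mk ⇑F with hf'def
  have hae : ⇑F =ᵐ[μ] f' := hFa.ae_eq_mk
  have hFmem : MemLp f' 2 μ := (memLp_congr_ae hae).1 (Lp.memLp F)
  have hsq : Measurable fun x => (‖f' x‖₊ : ℝ≥0∞) ^ 2 := hf'meas.nnnorm.coe_nnreal_ennreal.pow_const 2
  have hTotfin : ∫⁻ x, (‖f' x‖₊ : ℝ≥0∞) ^ 2 ∂μ < ⊤ := ((memLp_two_iff _ _).1 hFmem).2
  set Eset : ℕ → Set X := fun n => {x | wcH μ w φ x ≤ (n : ℝ≥0∞)} with hEdef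
  have hEm : ∀ n, MeasurableSet (Eset n) := fun n =>
    measurableSet_le measurable_wcH measurable_const
  set g : ℕ → X → ℂ := fun n => (Eset n).indicator f' with hgdef
  have hgmeas : ∀ n, Measurable (g n) := fun n => hf'meas.indicator (hEm n)
  have hgmem : ∀ n, MemLp (g n) 2 μ := fun n => hFmem.indicator (hEm n)
  set y : ℕ → Lp ℂ 2 μ := fun n => (hgmem n).toLp (g n) with hydef
  have hy_ae : ∀ n, ⇑(y n) =ᵐ[μ] g n := fun n => (hgmem n).coeFn_toLp
  have hymem : ∀ n, y n ∈ {f : Lp ℂ 2 μ |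
      MemLp (fun x => wcAlpha μ w φ α x * (f : X → ℂ) (φ x)) 2 μ} := by
    intro n
    obtain ⟨N, hNsub, hNm, hN0⟩ := exists_measurable_superset_of_null (ae_iff.1 (hy_ae n))
    have hcongr : (fun x => wcAlpha μ w φ α x * (y n : X → ℂ) (φ x))
        =ᵐ[μ] fun x => wcAlpha μ w φ α x * g n (φ x) := by
      filter_upwards [wcAlpha_null hw hφ habs hα0 hα1 hNm hN0] with x hx
      by_cases hmem2 : φ x ∈ N
      · rw [hx hmem2]; simp
      · have heq : (y n : X → ℂ) (φ x) = g n (φ x) := by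
          by_contra hne
          exact hmem2 (hNsub hne)
        rw [heq]
    rw [Set.mem_setOf_eq, memLp_congr_ae hcongr, memLp_two_iff]
    refine ⟨((measurable_wcAlpha hw hφ α).mul ((hgmeas n).comp hφ)).aestronglyMeasurable, ?_⟩
    have hgsq : Measurable fun x => (‖g n x‖₊ : ℝ≥0∞) ^ 2 := (hgmeas n).nnnorm.coe_nnreal_ennreal.pow_const 2
    calc ∫⁻ x, (‖wcAlpha μ w φ α x * g n (φ x)‖₊ : ℝ≥0∞) ^ 2 ∂μ
        = ∫⁻ x, (‖wcAlpha μ w φ α x‖₊ : ℝ≥0∞) ^ 2 * (‖g n (φ x)‖₊ : ℝ≥0∞) ^ 2 ∂μ := by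
          refine lintegral_congr fun x => ?_
          simp only [nnnorm_mul, ENNReal.coe_mul, mul_pow]; all_goals ring
      _ ≤ ∫⁻ x, (‖g n x‖₊ : ℝ≥0∞) ^ 2 * wcH μ w φ x ∂μ :=
          wc_keyIneq hw hφ habs hα0 hα1 hgsq
      _ ≤ ∫⁻ x, (n : ℝ≥0∞) * (‖f' x‖₊ : ℝ≥0∞) ^ 2 ∂μ := by
          refine lintegral_mono fun x => ?_
          by_cases hx : x ∈ Eset n
          · simp only [hgdef, Set.indicator_of_mem hx]
            calc (‖f' x‖₊ : ℝ≥0∞) ^ 2 * wcH μ w φ x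
                ≤ (‖f' x‖₊ : ℝ≥0∞) ^ 2 * (n : ℝ≥0∞) := mul_le_mul_right hx _
              _ = (n : ℝ≥0∞) * (‖f' x‖₊ : ℝ≥0∞) ^ 2 := mul_comm _ _
          · simp [hgdef, Set.indicator_of_notMem hx]
      _ = (n : ℝ≥0∞) * ∫⁻ x, (‖f' x‖₊ : ℝ≥0∞) ^ 2 ∂μ := lintegral_const_mul _ hsq
      _ < ⊤ := ENNReal.mul_lt_top (by simp) hTotfin
  -- the truncations converge to `F` in `L²`
  set T := ∫⁻ x, (‖f' x‖₊ : ℝ≥0∞) ^ 2 ∂μ with hTdef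
  set J : ℕ → ℝ≥0∞ :=
    fun n => ∫⁻ x, (Eset n).indicator (fun z => (‖f' z‖₊ : ℝ≥0∞) ^ 2) x ∂μ with hJdef
  set I : ℕ → ℝ≥0∞ :=
    fun n => ∫⁻ x, ((Eset n)ᶜ).indicator (fun z => (‖f' z‖₊ : ℝ≥0∞) ^ 2) x ∂μ with hIdef
  have hJtend : Tendsto J atTop (𝓝 T) := by
    refine lintegral_tendsto_of_tendsto_of_monotone
      (fun n => (hsq.indicator (hEm n)).aemeasurable) ?_ ?_
    · refine Eventually.of_forall fun x => ?_
      intro a b hab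
      refine Set.indicator_le_indicator_of_subset (fun z hz => ?_) (fun z => zero_le) x
      exact le_trans hz (Nat.cast_le.mpr hab : (a : ℝ≥0∞) ≤ b)
    · filter_upwards [hHfin] with x hx
      obtain ⟨n₀, hn₀⟩ := ENNReal.exists_nat_gt hx.ne
      refine tendsto_atTop_of_eventually_const (i₀ := n₀) fun n hn => ?_
      have hxE : x ∈ Eset n :=
        le_trans hn₀.le (Nat.cast_le.mpr hn : (n₀ : ℝ≥0∞) ≤ n)
      exact Set.indicator_of_mem hxE _
  have hsplit : ∀ n, J n + I n = T := by
    intro n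
    rw [hJdef, hIdef, ← lintegral_add_left (hsq.indicator (hEm n))]
    refine lintegral_congr fun x => ?_
    by_cases hx : x ∈ Eset n
    · simp [Set.indicator_of_mem hx,
        Set.indicator_of_notMem (Set.notMem_compl_iff.2 hx)]
    · simp [Set.indicator_of_notMem hx, Set.indicator_of_mem (Set.mem_compl hx)]
  have hJle : ∀ n, J n ≤ T := fun n => (hsplit n) ▸ le_self_add
  have hIeq : ∀ n, I n = T - J n := fun n =>
    ENNReal.eq_sub_of_add_eq ((lt_of_le_of_lt (hJle n) hTotfin).ne)
      (by rw [add_comm]; exact hsplit n)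
  have hItend : Tendsto I atTop (𝓝 0) := by
    have hsub : Tendsto (fun n => T - J n) atTop (𝓝 (T - T)) :=
      ENNReal.Tendsto.sub tendsto_const_nhds hJtend (Or.inl hTotfin.ne)
    rw [tsub_self] at hsub
    exact Tendsto.congr (fun n => (hIeq n).symm) hsub
  have hDn : ∀ n, eLpNorm (((Eset n)ᶜ).indicator f') 2 μ = (I n) ^ (1/2 : ℝ) := by
    intro n
    have hsqI : ∫⁻ x, (‖((Eset n)ᶜ).indicator f' x‖₊ : ℝ≥0∞) ^ 2 ∂μ = I n := by
      refine lintegral_congr fun x => ?_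
      by_cases hx : x ∈ (Eset n)ᶜ
      · simp [Set.indicator_of_mem hx]
      · simp [Set.indicator_of_notMem hx]
    have hsq2 := lintegral_sq_eq (((Eset n)ᶜ).indicator f') μ
    rw [hsqI] at hsq2
    rw [hsq2, ← ENNReal.rpow_natCast (eLpNorm (((Eset n)ᶜ).indicator f') 2 μ) 2,
      ← ENNReal.rpow_mul]
    norm_num
  have hDtend : Tendsto (fun n => eLpNorm (((Eset n)ᶜ).indicator f') 2 μ) atTop (𝓝 0) := by
    have hcont := (ENNReal.continuous_rpow_const (y := (1/2 : ℝ))).tendsto 0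
    have hcomp := hcont.comp hItend
    rw [ENNReal.zero_rpow_of_pos (by norm_num)] at hcomp
    exact Tendsto.congr (fun n => (hDn n).symm) hcomp
  have hdist : ∀ n, dist (y n) F = (eLpNorm (((Eset n)ᶜ).indicator f') 2 μ).toReal := by
    intro n
    rw [Lp.dist_def]
    congr 1
    have hneg : eLpNorm (⇑(y n) - ⇑F) 2 μ
        = eLpNorm (-(((Eset n)ᶜ).indicator f')) 2 μ := by
      refine eLpNorm_congr_ae ?_
      filter_upwards [hy_ae n, hae] with x h1 h2
      rw [Pi.sub_apply, h1, h2]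
      simp only [hgdef, Pi.neg_apply]
      by_cases hx : x ∈ Eset n
      · simp [Set.indicator_of_mem hx,
          Set.indicator_of_notMem (Set.notMem_compl_iff.2 hx)]
      · simp [Set.indicator_of_notMem hx, Set.indicator_of_mem (Set.mem_compl hx)]
    rw [hneg, eLpNorm_neg]
  have hfinal : Tendsto (fun n => dist (y n) F) atTop (𝓝 0) := by
    have htr := (ENNReal.tendsto_toReal (by simp : (0 : ℝ≥0∞) ≠ ⊤)).comp hDtend
    rw [ENNReal.toReal_zero] at htr
    exact Tendsto.congr (fun n => (hdist n).symm) htr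
  exact mem_closure_of_tendsto (tendsto_iff_dist_tendsto_zero.2 hfinal)
    (Eventually.of_forall hymem)
end

section
/- Assume the standing hypotheses. The formula $Pf = w\cdot \mathsf{E}_{\phi,w}(f_w)$, where $f_w = \chi_{\{w\neq0\}}\,f/w$, defines an orthogonal projection $P$ on $L^2(\mu)$ (i.e., $P$ is bounded, $P^2=P$, and $P^*=P$). -/
open MeasureTheory ENNReal NNReal Filter Topology

variable {X : Type*} [MeasurableSpace X]

section AuxLemmas

open Set

variable {μ : Measure X} {w : X → ℂ} {φ : X → X}

lemma aux_wc_sigmaFinite_trim [SigmaFinite μ] (hw : Measurable w) (hφ : Measurable φ)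
    (habs : (wcMeasure μ w).map φ ≪ μ)
    (hfin : ∀ᵐ x ∂μ, wcDeriv μ w φ x < ⊤)
    (hm : MeasurableSpace.comap φ inferInstance ≤ ‹MeasurableSpace X›) :
    SigmaFinite ((wcMeasure μ w).trim hm) := by
  haveI : SFinite (wcMeasure μ w) :=
    inferInstanceAs (SFinite (μ.withDensity fun x => (‖w x‖₊ : ℝ≥0∞) ^ 2))
  set ν := wcMeasure μ w with hν
  set h : X → ℝ≥0∞ := wcDeriv μ w φ with hh
  have hhm : Measurable h := Measure.measurable_rnDeriv _ _
  have hmap : μ.withDensity h = ν.map φ := Measure.withDensity_rnDeriv_eq _ _ habs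
  have hNmeas : MeasurableSet {x | h x = ∞} := hhm (measurableSet_singleton ∞)
  have hNnull : μ {x | h x = ∞} = 0 := by
    have heq : {x | h x = ∞} = {x | ¬ h x < ∞} := by ext x; simp [lt_top_iff_ne_top]
    rw [heq]; exact ae_iff.mp hfin
  set T : ℕ → Set X := fun n =>
    φ ⁻¹' ((spanningSets μ n ∩ {x | h x ≤ n}) ∪ {x | h x = ∞}) with hT
  have hTsm : ∀ n, MeasurableSet ((spanningSets μ n ∩ {x | h x ≤ n}) ∪ {x | h x = ∞}) :=
    fun n => ((measurableSet_spanningSets μ n).inter (hhm measurableSet_Iic)).union hNmeas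
  have hTm : ∀ n, MeasurableSet[MeasurableSpace.comap φ inferInstance] (T n) :=
    fun n => ⟨_, hTsm n, rfl⟩
  have hTfin : ∀ n, ν (T n) < ∞ := by
    intro n
    have : ν (T n) = (ν.map φ) ((spanningSets μ n ∩ {x | h x ≤ n}) ∪ {x | h x = ∞}) :=
      (Measure.map_apply hφ (hTsm n)).symm
    rw [this, ← hmap]
    calc μ.withDensity h ((spanningSets μ n ∩ {x | h x ≤ n}) ∪ {x | h x = ∞})
        ≤ μ.withDensity h (spanningSets μ n ∩ {x | h x ≤ n}) + μ.withDensity h {x | h x = ∞} :=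
          measure_union_le _ _
      _ ≤ n * μ (spanningSets μ n) + 0 := by
          gcongr
          · have hs' : MeasurableSet (spanningSets μ n ∩ {x | h x ≤ (n : ℝ≥0∞)}) :=
              (measurableSet_spanningSets μ n).inter (hhm measurableSet_Iic)
            rw [withDensity_apply _ hs']
            calc ∫⁻ x in spanningSets μ n ∩ {x | h x ≤ n}, h x ∂μ
                ≤ ∫⁻ _ in spanningSets μ n ∩ {x | h x ≤ n}, (n : ℝ≥0∞) ∂μ := by
                  refine setLIntegral_mono (measurable_const) fun x hx => hx.2
              _ = n * μ (spanningSets μ n ∩ {x | h x ≤ n}) := by rw [setLIntegral_const]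
              _ ≤ n * μ (spanningSets μ n) := by gcongr; exact inter_subset_left
          · rw [withDensity_apply _ hNmeas, setLIntegral_measure_zero _ _ hNnull]
      _ < ∞ := by
          rw [add_zero]
          exact ENNReal.mul_lt_top (natCast_lt_top n) (measure_spanningSets_lt_top μ n)
  refine ⟨⟨⟨T, fun n => trivial, fun n => ?_, ?_⟩⟩⟩
  · rw [trim_measurableSet_eq hm (hTm n)]; exact hTfin n
  · rw [hT, ← preimage_iUnion]
    have : (⋃ n, (spanningSets μ n ∩ {x | h x ≤ n}) ∪ {x | h x = ∞}) = univ := by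
      ext x
      simp only [mem_iUnion, mem_union, mem_inter_iff, mem_setOf_eq, mem_univ, iff_true]
      rcases eq_or_ne (h x) ∞ with hx | hx
      · exact ⟨0, Or.inr hx⟩
      · obtain ⟨n₁, hn₁⟩ := exists_nat_gt ((h x).toReal)
        obtain ⟨n₂, hn₂⟩ := mem_iUnion.mp ((iUnion_spanningSets μ) ▸ mem_univ x)
        refine ⟨max n₁ n₂, Or.inl ⟨monotone_spanningSets μ (le_max_right _ _) hn₂, ?_⟩⟩
        have : h x ≤ n₁ := by
          rw [← ENNReal.ofReal_toReal hx]
          exact ENNReal.ofReal_le_of_le_toReal (by simpa using hn₁.le)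
        exact this.trans (by exact_mod_cast Nat.cast_le.mpr (le_max_left n₁ n₂))
    rw [this, preimage_univ]

lemma aux_wc_lintegral (hw : Measurable w) (g : X → ℝ≥0∞) :
    ∫⁻ x, g x ∂(wcMeasure μ w) = ∫⁻ x, (‖w x‖₊ : ℝ≥0∞) ^ 2 * g x ∂μ :=
  lintegral_withDensity_eq_lintegral_mul_non_measurable μ
    ((hw.nnnorm.coe_nnreal_ennreal).pow_const 2)
    (Eventually.of_forall fun x => ENNReal.pow_lt_top coe_lt_top) g

lemma aux_wc_eLpNorm (hw : Measurable w) (g : X → ℂ) :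
    eLpNorm (fun x => w x * g x) 2 μ = eLpNorm g 2 (wcMeasure μ w) := by
  rw [eLpNorm_eq_lintegral_rpow_enorm_toReal two_ne_zero ENNReal.ofNat_ne_top,
    eLpNorm_eq_lintegral_rpow_enorm_toReal two_ne_zero ENNReal.ofNat_ne_top, aux_wc_lintegral hw]
  congr 1
  refine lintegral_congr fun x => ?_
  have h2 : ((2 : ℝ≥0∞).toReal) = ((2 : ℕ) : ℝ) := by norm_num
  rw [h2, ENNReal.rpow_natCast, ENNReal.rpow_natCast, enorm_mul, mul_pow]
  rfl

lemma aux_wc_ae (hw : Measurable w) {p : X → Prop} (h : ∀ᵐ x ∂(wcMeasure μ w), p x) :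
    ∀ᵐ x ∂μ, w x ≠ 0 → p x := by
  have := (ae_withDensity_iff ((hw.nnnorm.coe_nnreal_ennreal).pow_const 2)).mp h
  filter_upwards [this] with x hx hwx
  exact hx (by simpa using hwx)

lemma aux_wc_ae_ne_zero (hw : Measurable w) : ∀ᵐ x ∂(wcMeasure μ w), w x ≠ 0 := by
  unfold wcMeasure
  rw [ae_withDensity_iff ((hw.nnnorm.coe_nnreal_ennreal).pow_const 2)]
  exact Eventually.of_forall fun x hx => by simpa using hx

lemma aux_wc_ac : wcMeasure μ w ≪ μ := withDensity_absolutelyContinuous _ _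

lemma aux_wc_mul_fw (w f : X → ℂ) (x : X) :
    w x * fw w f x = if w x = 0 then 0 else f x := by
  by_cases h : w x = 0
  · simp [fw, h]
  · simp only [fw, if_neg h]
    exact mul_div_cancel₀ _ h

lemma aux_fw_memℒp (hw : Measurable w) {f : X → ℂ} (hf : MemLp f 2 μ) :
    MemLp (fw w f) 2 (wcMeasure μ w) ∧
      eLpNorm (fw w f) 2 (wcMeasure μ w) ≤ eLpNorm f 2 μ := by
  have hcW : MeasurableSet {x | w x = 0} := hw (measurableSet_singleton 0)
  have hle : eLpNorm (fw w f) 2 (wcMeasure μ w) ≤ eLpNorm f 2 μ := by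
    rw [← aux_wc_eLpNorm hw]
    refine eLpNorm_mono fun x => ?_
    rw [aux_wc_mul_fw]
    by_cases h : w x = 0 <;> simp [h]
  refine ⟨⟨?_, lt_of_le_of_lt hle hf.2⟩, hle⟩
  obtain ⟨f', hf'm, hff'⟩ := hf.1
  refine ⟨fw w f', ?_, ?_⟩
  · exact (Measurable.ite hcW measurable_const (hf'm.measurable.div hw)).stronglyMeasurable
  · exact (hff'.mono fun x hx => by unfold fw; rw [hx]).filter_mono aux_wc_ac.ae_le

lemma aux_wc_condexp_ae (hw : Measurable w) (hφ : Measurable φ)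
    (hm : MeasurableSpace.comap φ inferInstance ≤ ‹MeasurableSpace X›)
    [SigmaFinite ((wcMeasure μ w).trim hm)]
    {f Ef : X → ℂ} (hEf : IsCondExpC φ (wcMeasure μ w) (fw w f) Ef)
    (F : Lp ℂ 2 (wcMeasure μ w)) (hF : ⇑F =ᵐ[wcMeasure μ w] fw w f) :
    Ef =ᵐ[wcMeasure μ w] ⇑(condExpL2 ℂ ℂ hm F : Lp ℂ 2 (wcMeasure μ w)) := by
  have hgm := hEf.1
  have hnm := measurable_norm.comp hgm
  have hBm : ∀ n : ℕ, MeasurableSet[MeasurableSpace.comap φ inferInstance]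
      {x | ‖Ef x‖ ≤ (n : ℝ)} := fun n => hnm measurableSet_Iic
  have key : ∀ n : ℕ, ({x | ‖Ef x‖ ≤ (n : ℝ)}.indicator Ef)
      =ᵐ[wcMeasure μ w] ({x | ‖Ef x‖ ≤ (n : ℝ)}.indicator
        (⇑(condExpL2 ℂ ℂ hm F : Lp ℂ 2 (wcMeasure μ w)))) := by
    intro n
    set B := {x | ‖Ef x‖ ≤ (n : ℝ)} with hB
    have hBm0 : MeasurableSet B := hm _ (hBm n)
    refine ae_eq_of_forall_setIntegral_eq_of_sigmaFinite' hm ?_ ?_ ?_ ?_ ?_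
    · intro s hs hνs
      refine Measure.integrableOn_of_bounded (M := n) hνs.ne
        ((((hgm.mono hm le_rfl)).indicator hBm0).aestronglyMeasurable) ?_
      refine Eventually.of_forall fun x => ?_
      by_cases hx : x ∈ B
      · rw [Set.indicator_of_mem hx]; exact hx
      · rw [Set.indicator_of_notMem hx]; simp
    · intro s hs hνs
      rw [IntegrableOn, integrable_indicator_iff hBm0, IntegrableOn,
        Measure.restrict_restrict hBm0]
      exact integrableOn_Lp_of_measure_ne_top _ fact_one_le_two_ennreal.elim
        (((measure_mono inter_subset_right).trans_lt hνs).ne)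
    · intro s hs hνs
      rw [setIntegral_indicator hBm0, setIntegral_indicator hBm0]
      have hsB : MeasurableSet[MeasurableSpace.comap φ inferInstance] (s ∩ B) :=
        MeasurableSet.inter hs (hBm n)
      have hνsB : wcMeasure μ w (s ∩ B) < ∞ := (measure_mono inter_subset_left).trans_lt hνs
      obtain ⟨t, ht, hpre⟩ := hsB
      have h1 : ∫ x in s ∩ B, Ef x ∂(wcMeasure μ w)
          = ∫ x in s ∩ B, fw w f x ∂(wcMeasure μ w) := by
        rw [← hpre]
        exact hEf.2 t ht (hpre ▸ hνsB)
      have h2 : ∫ x in s ∩ B, fw w f x ∂(wcMeasure μ w)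
          = ∫ x in s ∩ B, F x ∂(wcMeasure μ w) :=
        integral_congr_ae (ae_restrict_of_ae hF.symm)
      have hsB' : MeasurableSet[MeasurableSpace.comap φ inferInstance] (s ∩ B) := ⟨t, ht, hpre⟩
      have h3 := integral_condExpL2_eq_of_fin_meas_real (𝕜 := ℂ) (hm := hm) F hsB' hνsB.ne
      exact h1.trans (h2.trans h3.symm)
    · exact ⟨B.indicator Ef, (hgm.indicator (hBm n)).stronglyMeasurable, EventuallyEq.rfl⟩
    · obtain ⟨c', hc'm, hcc'⟩ := aestronglyMeasurable_condExpL2 (𝕜 := ℂ) hm F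
      refine ⟨B.indicator c', hc'm.indicator (hBm n), hcc'.mono fun x hx => ?_⟩
      by_cases hxB : x ∈ B
      · rw [Set.indicator_of_mem hxB, Set.indicator_of_mem hxB]; exact hx
      · rw [Set.indicator_of_notMem hxB, Set.indicator_of_notMem hxB]
  have hae := ae_all_iff.mpr key
  filter_upwards [hae] with x hx
  obtain ⟨n, hn⟩ := exists_nat_ge ‖Ef x‖
  have hxB : x ∈ {y | ‖Ef y‖ ≤ (n : ℝ)} := hn
  have := hx n
  rwa [Set.indicator_of_mem hxB, Set.indicator_of_mem hxB] at this

lemma aux_condExpL2_fixed {m m0 : MeasurableSpace X} {ν : Measure X} (hm : m ≤ m0)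
    [SigmaFinite (ν.trim hm)] {Ef : X → ℂ}
    (hmE : Measurable[m] Ef) (hL : MemLp Ef 2 ν) :
    ((condExpL2 ℂ ℂ hm (hL.toLp Ef) : lpMeas ℂ ℂ m 2 ν) : Lp ℂ 2 ν) = hL.toLp Ef := by
  haveI : Fact (m ≤ m0) := ⟨hm⟩
  have h_mem : hL.toLp Ef ∈ lpMeas ℂ ℂ m 2 ν :=
    mem_lpMeas_iff_aestronglyMeasurable.mpr ⟨Ef, hmE.stronglyMeasurable, hL.coeFn_toLp⟩
  let ind : lpMeas ℂ ℂ m 2 ν := ⟨hL.toLp Ef, h_mem⟩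
  have h_coe_ind : (ind : Lp ℂ 2 ν) = hL.toLp Ef := rfl
  have h_orth_mem := Submodule.orthogonalProjectionOnto_mem_subspace_eq_self ind
  rw [condExpL2, ← h_coe_ind, h_orth_mem]

lemma aux_nnsq_smul (z c : ℂ) : (‖z‖₊ ^ 2 : ℝ≥0) • c = (z * (starRingEnd ℂ) z) * c := by
  rw [NNReal.smul_def, Complex.real_smul, Complex.mul_conj]
  push_cast
  rw [Complex.normSq_eq_norm_sq]
  norm_num

lemma aux_wc_integral_smul (hw : Measurable w) (g : X → ℂ) :
    ∫ x, g x ∂(wcMeasure μ w) = ∫ x, (‖w x‖₊ ^ 2 : ℝ≥0) • g x ∂μ := by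
  have : wcMeasure μ w = μ.withDensity (fun x => ((‖w x‖₊ ^ 2 : ℝ≥0) : ℝ≥0∞)) := by
    unfold wcMeasure
    congr 1
  rw [this, integral_withDensity_eq_integral_smul (hw.nnnorm.pow_const 2)]

lemma aux_wc_int_left (hw : Measurable w) (Ef g : X → ℂ) :
    ∫ x, (w x * Ef x) * (starRingEnd ℂ) (g x) ∂μ
      = ∫ x, Ef x * (starRingEnd ℂ) (fw w g x) ∂(wcMeasure μ w) := by
  rw [aux_wc_integral_smul hw]
  refine integral_congr_ae (Eventually.of_forall fun x => ?_)
  simp only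
  by_cases h : w x = 0
  · simp [h, fw]
  · rw [aux_nnsq_smul, fw]
    simp only [if_neg h, map_div₀]
    have hc : (starRingEnd ℂ) (w x) ≠ 0 := by simpa using h
    field_simp

lemma aux_wc_int_right (hw : Measurable w) (f Eg : X → ℂ) :
    ∫ x, f x * (starRingEnd ℂ) (w x * Eg x) ∂μ
      = ∫ x, fw w f x * (starRingEnd ℂ) (Eg x) ∂(wcMeasure μ w) := by
  rw [aux_wc_integral_smul hw]
  refine integral_congr_ae (Eventually.of_forall fun x => ?_)
  simp only
  by_cases h : w x = 0
  · simp [h, fw]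
  · rw [aux_nnsq_smul, fw]
    simp only [if_neg h, map_mul]
    field_simp

lemma aux_inner_int {ν : Measure X} (F G : Lp ℂ 2 ν) :
    ∫ x, F x * (starRingEnd ℂ) (G x) ∂ν = (starRingEnd ℂ) (@inner ℂ _ _ F G) := by
  rw [L2.inner_def, ← integral_conj]
  refine integral_congr_ae (Eventually.of_forall fun x => ?_)
  simp [RCLike.inner_apply, mul_comm]

end AuxLemmas

/-- `P f = w · E_{φ,w}(f_w)` defines an orthogonal projection on
`L²(μ)`: it maps `L²(μ)` boundedly into itself, is idempotent, and is self-adjoint. -/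
theorem aluthge_wco_projection
    (μ : Measure X) [SigmaFinite μ] (w : X → ℂ) (φ : X → X)
    (hw : Measurable w) (hφ : Measurable φ)
    (habs : (wcMeasure μ w).map φ ≪ μ)
    (hfin : ∀ᵐ x ∂μ, wcDeriv μ w φ x < ⊤)
    (E : (X → ℂ) → X → ℂ)
    (hE : ∀ f : X → ℂ, MemLp f 2 μ → IsCondExpC φ (wcMeasure μ w) (fw w f) (E f))
    (P : (X → ℂ) → X → ℂ)
    (hP : ∀ f : X → ℂ, P f = fun x => w x * E f x) :
    (∀ f : X → ℂ, MemLp f 2 μ → MemLp (P f) 2 μ) ∧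
    (∃ C : ℝ≥0, ∀ f : X → ℂ, MemLp f 2 μ →
      eLpNorm (P f) 2 μ ≤ (C : ℝ≥0∞) * eLpNorm f 2 μ) ∧
    (∀ f : X → ℂ, MemLp f 2 μ → P (P f) =ᵐ[μ] P f) ∧
    (∀ f g : X → ℂ, MemLp f 2 μ → MemLp g 2 μ →
      ∫ x, P f x * (starRingEnd ℂ) (g x) ∂μ = ∫ x, f x * (starRingEnd ℂ) (P g x) ∂μ) := by
  have hm : MeasurableSpace.comap φ inferInstance ≤ ‹MeasurableSpace X› :=
    measurable_iff_comap_le.mp hφ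
  haveI : SigmaFinite ((wcMeasure μ w).trim hm) :=
    aux_wc_sigmaFinite_trim hw hφ habs hfin hm
  -- E f is in L² of the weighted measure, with norm bound
  have hEfprop : ∀ f : X → ℂ, MemLp f 2 μ → MemLp (E f) 2 (wcMeasure μ w) ∧
      eLpNorm (E f) 2 (wcMeasure μ w) ≤ eLpNorm f 2 μ := by
    intro f hf
    obtain ⟨hfwm, hfwle⟩ := aux_fw_memℒp hw hf
    have hkey := aux_wc_condexp_ae hw hφ hm (hE f hf) (hfwm.toLp _) hfwm.coeFn_toLp
    constructor
    · exact (Lp.memLp _).ae_eq hkey.symm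
    · calc eLpNorm (E f) 2 (wcMeasure μ w)
          = eLpNorm (⇑(condExpL2 ℂ ℂ hm (hfwm.toLp _) : Lp ℂ 2 (wcMeasure μ w)))
              2 (wcMeasure μ w) := eLpNorm_congr_ae hkey
        _ ≤ eLpNorm (⇑(hfwm.toLp (fw w f))) 2 (wcMeasure μ w) :=
              eLpNorm_condExpL2_le hm (hfwm.toLp _)
        _ = eLpNorm (fw w f) 2 (wcMeasure μ w) := eLpNorm_congr_ae hfwm.coeFn_toLp
        _ ≤ eLpNorm f 2 μ := hfwle
  have hmemP : ∀ f : X → ℂ, MemLp f 2 μ → MemLp (P f) 2 μ := by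
    intro f hf
    rw [hP f]
    refine ⟨(hw.mul ((hE f hf).1.mono hm le_rfl)).aestronglyMeasurable, ?_⟩
    rw [aux_wc_eLpNorm hw]
    exact (hEfprop f hf).1.2
  refine ⟨hmemP, ⟨1, fun f hf => ?_⟩, fun f hf => ?_, fun f g hf hg => ?_⟩
  · -- boundedness with C = 1
    rw [hP f, aux_wc_eLpNorm hw, ENNReal.coe_one, one_mul]
    exact (hEfprop f hf).2
  · -- idempotence
    have hPf2 := hmemP f hf
    obtain ⟨hfwPm, -⟩ := aux_fw_memℒp hw hPf2
    have hEfL2 := (hEfprop f hf).1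
    have hfwPf : fw w (P f) =ᵐ[wcMeasure μ w] E f := by
      filter_upwards [aux_wc_ae_ne_zero hw] with x hx
      simp only [fw, hP f, if_neg hx]
      exact mul_div_cancel_left₀ _ hx
    have hkeyP := aux_wc_condexp_ae hw hφ hm (hE (P f) hPf2) (hfwPm.toLp _) hfwPm.coeFn_toLp
    have htoLp : hfwPm.toLp (fw w (P f)) = hEfL2.toLp (E f) :=
      MemLp.toLp_congr _ _ hfwPf
    have hfix := aux_condExpL2_fixed hm (hE f hf).1 hEfL2
    have hEeq : E (P f) =ᵐ[wcMeasure μ w] E f := by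
      refine hkeyP.trans ?_
      rw [htoLp, hfix]
      exact hEfL2.coeFn_toLp
    filter_upwards [aux_wc_ae hw hEeq] with x hx
    have h1 : P (P f) x = w x * E (P f) x := by rw [hP (P f)]
    have h2 : P f x = w x * E f x := by rw [hP f]
    rw [h1, h2]
    by_cases hwx : w x = 0
    · simp [hwx]
    · rw [hx hwx]
  · -- self-adjointness
    obtain ⟨hfwfm, -⟩ := aux_fw_memℒp hw hf
    obtain ⟨hfwgm, -⟩ := aux_fw_memℒp hw hg
    have hkf := aux_wc_condexp_ae hw hφ hm (hE f hf) (hfwfm.toLp _) hfwfm.coeFn_toLp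
    have hkg := aux_wc_condexp_ae hw hφ hm (hE g hg) (hfwgm.toLp _) hfwgm.coeFn_toLp
    calc ∫ x, P f x * (starRingEnd ℂ) (g x) ∂μ
        = ∫ x, (w x * E f x) * (starRingEnd ℂ) (g x) ∂μ := by rw [hP f]
      _ = ∫ x, E f x * (starRingEnd ℂ) (fw w g x) ∂(wcMeasure μ w) := aux_wc_int_left hw _ _
      _ = ∫ x, (condExpL2 ℂ ℂ hm (hfwfm.toLp (fw w f)) : Lp ℂ 2 (wcMeasure μ w)) x
            * (starRingEnd ℂ) ((hfwgm.toLp (fw w g)) x) ∂(wcMeasure μ w) := by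
          refine integral_congr_ae ?_
          filter_upwards [hkf, hfwgm.coeFn_toLp] with x h1 h2
          rw [h1, h2]
      _ = (starRingEnd ℂ) (@inner ℂ _ _
            ((condExpL2 ℂ ℂ hm (hfwfm.toLp (fw w f)) : Lp ℂ 2 (wcMeasure μ w)))
            (hfwgm.toLp (fw w g))) := aux_inner_int _ _
      _ = (starRingEnd ℂ) (@inner ℂ _ _ (hfwfm.toLp (fw w f))
            ((condExpL2 ℂ ℂ hm (hfwgm.toLp (fw w g)) : Lp ℂ 2 (wcMeasure μ w)))) := by
          rw [inner_condExpL2_left_eq_right]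
      _ = ∫ x, (hfwfm.toLp (fw w f)) x * (starRingEnd ℂ)
            ((condExpL2 ℂ ℂ hm (hfwgm.toLp (fw w g)) : Lp ℂ 2 (wcMeasure μ w)) x)
            ∂(wcMeasure μ w) := (aux_inner_int _ _).symm
      _ = ∫ x, fw w f x * (starRingEnd ℂ) (E g x) ∂(wcMeasure μ w) := by
          refine integral_congr_ae ?_
          filter_upwards [hkg, hfwfm.coeFn_toLp] with x h1 h2
          rw [h2, h1]
      _ = ∫ x, f x * (starRingEnd ℂ) (w x * E g x) ∂μ := (aux_wc_int_right hw _ _).symm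
      _ = ∫ x, f x * (starRingEnd ℂ) (P g x) ∂μ := by rw [hP g]
end

section
/- Assume the standing hypotheses with $C_{\phi,w}$ densely defined and $\mathsf{h}_{\phi,w}<\infty$ a.e. $[\mu]$. Let $g_1,g_2\colon X\to[0,\infty)$ be measurable. Then the inequality $\int_X \big(\mathsf{E}_{\phi,w}((g_1f)^{1/2})\big)^2\,d\mu_w \le \int_X g_2 f\,d\mu_w$ holds for every measurable $f\colon X\to[0,\infty]$ if and only if $\mu_w(\{g_1\neq0\}\setminus\{g_2\neq0\})=0$ and $\mathsf{E}_{\phi,w}(\chi_{\{g_2\neq0\}}\, g_1/g_2)\le 1$ a.e. $[\mu_w]$. -/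
open MeasureTheory ENNReal NNReal Filter Topology

variable {X : Type*} [MeasurableSpace X]

/-! ### Auxiliary arithmetic lemmas -/

private lemma ennreal_two_mul_le (a b : ℝ≥0∞) : 2 * (a * b) ≤ a ^ 2 + b ^ 2 := by
  rcases eq_or_ne a ∞ with ha | ha
  · rcases eq_or_ne b 0 with hb | hb
    · simp [hb]
    · rw [ha]; simp [ENNReal.top_pow, top_mul, hb]
  rcases eq_or_ne b ∞ with hb | hb
  · rcases eq_or_ne a 0 with ha0 | ha0
    · simp [ha0]
    · rw [hb]; simp [ENNReal.top_pow, mul_top, ha0]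
  lift a to ℝ≥0 using ha
  lift b to ℝ≥0 using hb
  rw [← ENNReal.coe_mul, ← ENNReal.coe_ofNat, ← ENNReal.coe_mul, ← ENNReal.coe_pow,
    ← ENNReal.coe_pow, ← ENNReal.coe_add, ENNReal.coe_le_coe, ← NNReal.coe_le_coe]
  push_cast
  nlinarith [two_mul_le_add_sq (a : ℝ) (b : ℝ)]

private lemma sq_rpow_half (a : ℝ≥0∞) : (a ^ 2) ^ (1 / 2 : ℝ) = a := by
  rw [← ENNReal.rpow_natCast a 2, ← ENNReal.rpow_mul]
  norm_num

private lemma rpow_half_sq (a : ℝ≥0∞) : (a ^ (1 / 2 : ℝ)) ^ 2 = a := by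
  rw [← ENNReal.rpow_natCast _ 2, ← ENNReal.rpow_mul]
  norm_num

private lemma geom_mean_le {e : ℝ≥0∞} (he0 : e ≠ 0) (het : e ≠ ∞) (u v : ℝ≥0∞) :
    (u * v) ^ (1 / 2 : ℝ) ≤ (e * u + e⁻¹ * v) / 2 := by
  have h1 : (u * v) ^ (1 / 2 : ℝ) = (e * u) ^ (1 / 2 : ℝ) * (e⁻¹ * v) ^ (1 / 2 : ℝ) := by
    rw [← ENNReal.mul_rpow_of_nonneg _ _ (by norm_num)]
    congr 1
    calc u * v = e * e⁻¹ * (u * v) := by rw [ENNReal.mul_inv_cancel he0 het, one_mul]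
    _ = e * u * (e⁻¹ * v) := by ring
  rw [h1, ENNReal.le_div_iff_mul_le (Or.inl (by norm_num)) (Or.inl (by norm_num)), mul_comm _ 2]
  calc 2 * ((e * u) ^ (1 / 2 : ℝ) * (e⁻¹ * v) ^ (1 / 2 : ℝ))
      ≤ ((e * u) ^ (1 / 2 : ℝ)) ^ 2 + ((e⁻¹ * v) ^ (1 / 2 : ℝ)) ^ 2 := ennreal_two_mul_le _ _
    _ = e * u + e⁻¹ * v := by rw [rpow_half_sq, rpow_half_sq]

private lemma nnreal_aux2 (a m : ℝ≥0) (hm0 : a = 0 → m = 0) :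
    a * (if a = 0 then 0 else m ^ 2 / a) = m ^ 2 := by
  by_cases ha : a = 0
  · simp [ha, hm0 ha]
  · rw [if_neg ha, mul_div_cancel₀ _ ha]

private lemma nnreal_aux (a b m : ℝ≥0) (hm : b ≠ 0 → m ≤ a / b) :
    b * (if a = 0 then 0 else m ^ 2 / a) ≤ m := by
  by_cases ha : a = 0
  · simp [ha]
  rw [if_neg ha]
  by_cases hb : b = 0
  · simp [hb]
  have hmb : m * b ≤ a := by
    rw [← le_div_iff₀ (pos_iff_ne_zero.mpr hb)]; exact hm hb
  have ha' : 0 < a := pos_iff_ne_zero.mpr ha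
  rw [mul_comm, div_mul_eq_mul_div, div_le_iff₀ ha']
  calc m ^ 2 * b = m * b * m := by ring
  _ ≤ a * m := mul_le_mul_left hmb m
  _ = m * a := mul_comm _ _

private lemma sq_le_of_forall {a b c : ℝ≥0∞} (hb : b ≤ 1)
    (h : ∀ q : ℚ, 0 < q → a ≤ (ENNReal.ofReal q * b + (ENNReal.ofReal q)⁻¹ * c) / 2) :
    a ^ 2 ≤ c := by
  rcases eq_or_ne c ∞ with hc | hc
  · simp [hc]
  refine ENNReal.le_of_forall_pos_le_add fun ε hε hc' => ?_
  have hct : (c + ε : ℝ≥0∞) ≠ ∞ := by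
    exact ENNReal.add_ne_top.mpr ⟨hc, ENNReal.coe_ne_top⟩
  have hlt : c.toReal < (c + ε).toReal := by
    refine ENNReal.toReal_strict_mono hct ?_
    exact ENNReal.lt_add_right hc (by exact_mod_cast hε.ne')
  have hsq : Real.sqrt c.toReal < Real.sqrt (c + ε).toReal :=
    Real.sqrt_lt_sqrt ENNReal.toReal_nonneg hlt
  obtain ⟨q, hq1, hq2⟩ := exists_rat_btwn hsq
  have hq0 : 0 < (q : ℝ) := lt_of_le_of_lt (Real.sqrt_nonneg _) hq1
  set e : ℝ≥0∞ := ENNReal.ofReal q with he_def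
  have he0 : e ≠ 0 := by
    simp only [he_def, ne_eq, ENNReal.ofReal_eq_zero, not_le]
    exact_mod_cast hq0
  have het : e ≠ ∞ := ENNReal.ofReal_ne_top
  have hcq : c ≤ e * e := by
    have h1 : c.toReal < (q : ℝ) * q := by
      calc c.toReal = Real.sqrt c.toReal * Real.sqrt c.toReal :=
            (Real.mul_self_sqrt ENNReal.toReal_nonneg).symm
      _ < (q : ℝ) * q := by nlinarith [Real.sqrt_nonneg c.toReal]
    calc c = ENNReal.ofReal c.toReal := (ENNReal.ofReal_toReal hc).symm
    _ ≤ ENNReal.ofReal ((q : ℝ) * q) := ENNReal.ofReal_le_ofReal h1.le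
    _ = e * e := ENNReal.ofReal_mul hq0.le
  have hae : a ≤ e := by
    have h1 := h q (by exact_mod_cast hq0)
    have h2 : e * b + e⁻¹ * c ≤ e + e := by
      refine add_le_add ?_ ?_
      · calc e * b ≤ e * 1 := mul_le_mul_right hb e
        _ = e := mul_one e
      · calc e⁻¹ * c ≤ e⁻¹ * (e * e) := mul_le_mul_right hcq _
        _ = e⁻¹ * e * e := (mul_assoc _ _ _).symm
        _ = e := by rw [ENNReal.inv_mul_cancel he0 het, one_mul]
    calc a ≤ (e * b + e⁻¹ * c) / 2 := h1
    _ ≤ (e + e) / 2 := by gcongr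
    _ = e := by
        rw [← two_mul, mul_comm, mul_div_assoc, ENNReal.div_self (by norm_num) (by norm_num),
          mul_one]
  have hq2' : (q : ℝ) * q < (c + ε).toReal := by
    calc (q : ℝ) * q < Real.sqrt (c + ε).toReal * Real.sqrt (c + ε).toReal := by
          nlinarith [Real.sqrt_nonneg (c + ε).toReal]
    _ = (c + ε).toReal := Real.mul_self_sqrt ENNReal.toReal_nonneg
  calc a ^ 2 = a * a := sq a
  _ ≤ e * e := mul_le_mul' hae hae
  _ = ENNReal.ofReal ((q : ℝ) * q) := (ENNReal.ofReal_mul hq0.le).symm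
  _ ≤ ENNReal.ofReal (c + ε).toReal := ENNReal.ofReal_le_ofReal hq2'.le
  _ = c + ε := ENNReal.ofReal_toReal hct

/-! ### Conditional expectation machinery -/

private lemma key_trim' {α : Type*} {m m0 : MeasurableSpace α} (hm : m ≤ m0) (ν : Measure α)
    {g : α → ℝ≥0∞} (hg : Measurable[m] g) {s : Set α} (hs : MeasurableSet[m] s) :
    ∫⁻ x in s, g x ∂(ν.trim hm) = ∫⁻ x in s, g x ∂ν := by
  rw [restrict_trim hm ν hs, lintegral_trim _ hg]

private lemma sigmaFinite_trim' {φ : X → X} (hφ : Measurable φ) (ν : Measure X)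
    (S : ℕ → Set X) (hSm : ∀ n, MeasurableSet (S n)) (hSU : (⋃ n, S n) = Set.univ)
    (hSfin : ∀ n, ν (φ ⁻¹' S n) < ∞) : SigmaFinite (ν.trim hφ.comap_le) := by
  refine ⟨⟨⟨fun n => φ ⁻¹' S n, fun _ => trivial, fun n => ?_, ?_⟩⟩⟩
  · rw [trim_measurableSet_eq hφ.comap_le ⟨S n, hSm n, rfl⟩]
    exact hSfin n
  · rw [← Set.preimage_iUnion, hSU, Set.preimage_univ]

private lemma exists_condexp_generic {α : Type*} {m m0 : MeasurableSpace α} (hm : m ≤ m0)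
    (ν : @Measure α m0) (T : ℕ → Set α) (hTm : ∀ n, MeasurableSet[m] (T n))
    (hTmono : Monotone T) (hTU : (⋃ n, T n) = Set.univ) (hTfin : ∀ n, ν (T n) < ∞)
    {f : α → ℝ≥0∞} (hf : Measurable[m0] f) :
    ∃ E, Measurable[m] E ∧ ∀ s : Set α, MeasurableSet[m] s →
      ∫⁻ x in s, E x ∂ν = ∫⁻ x in s, f x ∂ν := by
  haveI hsf : SigmaFinite (ν.trim hm) := ⟨⟨⟨T, fun _ => trivial, fun n => by
      rw [trim_measurableSet_eq hm (hTm n)]; exact hTfin n, hTU⟩⟩⟩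
  classical
  set fn : ℕ → α → ℝ≥0∞ := fun n => (T n).indicator (fun x => min (f x) n) with hfn_def
  have hfn_meas : ∀ n, Measurable[m0] (fn n) :=
    fun n => Measurable.indicator (Measurable.min hf measurable_const) (hm _ (hTm n))
  have hfn_le : ∀ n x, fn n x ≤ f x := fun n x => by
    simp only [hfn_def, Set.indicator]
    split
    · exact min_le_left _ _
    · exact zero_le
  have hfn_mono : Monotone fn := by
    intro i j hij x
    by_cases hxi : x ∈ T i
    · have hxj : x ∈ T j := hTmono hij hxi
      simp only [hfn_def, Set.indicator_of_mem hxi, Set.indicator_of_mem hxj]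
      exact min_le_min le_rfl (Nat.cast_le.mpr hij)
    · simp only [hfn_def, Set.indicator_of_notMem hxi]
      exact zero_le
  have hfn_sup : ∀ x, (⨆ n, fn n x) = f x := by
    intro x
    refine le_antisymm (iSup_le fun n => hfn_le n x) ?_
    obtain ⟨n₀, hn₀⟩ : ∃ n₀, x ∈ T n₀ := by
      simpa using (hTU ▸ Set.mem_univ x : x ∈ ⋃ n, T n)
    rcases eq_or_ne (f x) ∞ with hfx | hfx
    · have h1 : ∀ k : ℕ, (k : ℝ≥0∞) ≤ ⨆ n, fn n x := by
        intro k
        refine le_trans ?_ (le_iSup (fun n => fn n x) (max n₀ k))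
        have hxk : x ∈ T (max n₀ k) := hTmono (le_max_left _ _) hn₀
        have heq : fn (max n₀ k) x = min (f x) (max n₀ k : ℕ) := Set.indicator_of_mem hxk _
        rw [heq, hfx, min_eq_right le_top]
        exact Nat.cast_le.mpr (le_max_right n₀ k)
      rw [hfx]
      calc (⊤ : ℝ≥0∞) = ⨆ k : ℕ, (k : ℝ≥0∞) := ENNReal.iSup_natCast.symm
      _ ≤ _ := iSup_le h1
    · obtain ⟨k, hk⟩ := ENNReal.exists_nat_gt hfx
      refine le_trans ?_ (le_iSup (fun n => fn n x) (max n₀ k))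
      have hxk : x ∈ T (max n₀ k) := hTmono (le_max_left _ _) hn₀
      simp only [hfn_def, Set.indicator_of_mem hxk]
      refine le_min le_rfl ?_
      exact le_trans hk.le (Nat.cast_le.mpr (le_max_right n₀ k))
  set κ : ℕ → @Measure α m := fun n => (ν.withDensity (fn n)).trim hm with hκ_def
  have hκeq : ∀ n {s : Set α}, MeasurableSet[m] s → κ n s = ∫⁻ x in s, fn n x ∂ν := by
    intro n s hs
    rw [hκ_def, trim_measurableSet_eq hm hs, withDensity_apply _ (hm _ hs)]
  have hκfin : ∀ n, IsFiniteMeasure (κ n) := by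
    intro n
    constructor
    rw [hκeq n MeasurableSet.univ, Measure.restrict_univ]
    calc ∫⁻ x, fn n x ∂ν ≤ ∫⁻ x, (T n).indicator (fun _ => (n : ℝ≥0∞)) x ∂ν := by
          refine lintegral_mono fun x => ?_
          by_cases hx : x ∈ T n
          · simp only [hfn_def, Set.indicator_of_mem hx]; exact min_le_right _ _
          · simp only [hfn_def, Set.indicator_of_notMem hx]; exact le_rfl
      _ = (n : ℝ≥0∞) * ν (T n) := by
          rw [lintegral_indicator (hm _ (hTm n)), setLIntegral_const]
      _ < ∞ := ENNReal.mul_lt_top (ENNReal.natCast_lt_top n) (hTfin n)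
  have hκac : ∀ n, κ n ≪ ν.trim hm := by
    intro n
    refine Measure.AbsolutelyContinuous.mk fun s hs h0 => ?_
    rw [trim_measurableSet_eq hm hs] at h0
    rw [hκeq n hs]
    exact setLIntegral_measure_zero _ _ h0
  set En : ℕ → α → ℝ≥0∞ := fun n => (κ n).rnDeriv (ν.trim hm) with hEn_def
  have hEn_meas : ∀ n, Measurable[m] (En n) := fun n => Measure.measurable_rnDeriv _ _
  have hEn_int : ∀ n s, MeasurableSet[m] s →
      ∫⁻ x in s, En n x ∂ν = ∫⁻ x in s, fn n x ∂ν := by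
    intro n s hs
    haveI := hκfin n
    have h1 : (ν.trim hm).withDensity (En n) = κ n :=
      Measure.withDensity_rnDeriv_eq _ _ (hκac n)
    have h2 : ∫⁻ x in s, En n x ∂(ν.trim hm) = κ n s := by
      rw [← withDensity_apply _ hs, h1]
    rw [← key_trim' hm ν (hEn_meas n) hs, h2, hκeq n hs]
  have hEn_mono : ∀ n, En n ≤ᵐ[ν.trim hm] En (n + 1) := by
    intro n
    refine @ae_le_of_forall_setLIntegral_le_of_sigmaFinite α m (ν.trim hm) hsf _ _
      (hEn_meas n) fun s hs _ => ?_
    rw [key_trim' hm ν (hEn_meas n) hs, key_trim' hm ν (hEn_meas (n + 1)) hs,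
      hEn_int n s hs, hEn_int (n + 1) s hs]
    exact lintegral_mono fun x => hfn_mono (Nat.le_succ n) x
  have hae : ∀ᵐ x ∂(ν.trim hm), ∀ n, En n x ≤ En (n + 1) x := ae_all_iff.mpr hEn_mono
  set N : Set α := {x | ¬ ∀ n, En n x ≤ En (n + 1) x} with hN_def
  have hNm : MeasurableSet[m] N := by
    have h1 : ∀ n, MeasurableSet[m] {x | En n x ≤ En (n + 1) x} := fun n =>
      measurableSet_le (hEn_meas n) (hEn_meas (n + 1))
    have h2 : N = (⋂ n, {x | En n x ≤ En (n + 1) x})ᶜ := by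
      ext x; simp [hN_def]
    rw [h2]
    exact (MeasurableSet.iInter h1).compl
  have hNnull : ν.trim hm N = 0 := hae
  set En' : ℕ → α → ℝ≥0∞ := fun n => (Nᶜ).indicator (En n) with hEn'_def
  have hEn'_meas : ∀ n, Measurable[m] (En' n) := fun n => (hEn_meas n).indicator hNm.compl
  have hEn'_mono : Monotone En' := by
    refine monotone_nat_of_le_succ fun n x => ?_
    by_cases hx : x ∈ Nᶜ
    · rw [hEn'_def]
      simp only [Set.indicator_of_mem hx]
      have hx' : ∀ k, En k x ≤ En (k + 1) x := not_not.mp hx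
      exact hx' n
    · rw [hEn'_def]
      simp only [Set.indicator_of_notMem hx, le_refl]
  have hEn'_ae : ∀ n, En' n =ᵐ[ν.trim hm] En n := by
    intro n
    rw [EventuallyEq, ae_iff]
    refine measure_mono_null (fun x hx => ?_) hNnull
    simp only [Set.mem_setOf_eq] at hx
    by_contra hxN
    exact hx (Set.indicator_of_mem (Set.mem_compl hxN) _)
  refine ⟨fun x => ⨆ n, En' n x, Measurable.iSup hEn'_meas, fun s hs => ?_⟩
  have step1 : ∫⁻ x in s, (⨆ n, En' n x) ∂ν = ∫⁻ x in s, (⨆ n, En' n x) ∂(ν.trim hm) :=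
    (key_trim' hm ν (Measurable.iSup hEn'_meas) hs).symm
  have step2 : ∫⁻ x in s, (⨆ n, En' n x) ∂(ν.trim hm) = ⨆ n, ∫⁻ x in s, En' n x ∂(ν.trim hm) :=
    @lintegral_iSup α m ((ν.trim hm).restrict s) _ hEn'_meas hEn'_mono
  have step3 : ∀ n, ∫⁻ x in s, En' n x ∂(ν.trim hm) = ∫⁻ x in s, fn n x ∂ν := by
    intro n
    rw [lintegral_congr_ae (ae_restrict_of_ae (hEn'_ae n)), key_trim' hm ν (hEn_meas n) hs,
      hEn_int n s hs]
  have step4 : (⨆ n, ∫⁻ x in s, fn n x ∂ν) = ∫⁻ x in s, f x ∂ν := by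
    rw [← lintegral_iSup hfn_meas hfn_mono]
    exact lintegral_congr fun x => hfn_sup x
  rw [step1, step2]
  simp_rw [step3]
  exact step4

private lemma exists_isCondExp {φ : X → X} (hφ : Measurable φ) (ν : Measure X)
    (S : ℕ → Set X) (hSm : ∀ n, MeasurableSet (S n)) (hSmono : Monotone S)
    (hSU : (⋃ n, S n) = Set.univ) (hSfin : ∀ n, ν (φ ⁻¹' S n) < ∞)
    {f : X → ℝ≥0∞} (hf : Measurable f) : ∃ E, IsCondExp φ ν f E := by
  obtain ⟨E, hE1, hE2⟩ := exists_condexp_generic hφ.comap_le ν (fun n => φ ⁻¹' S n)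
    (fun n => ⟨S n, hSm n, rfl⟩) (fun i j hij => Set.preimage_mono (hSmono hij))
    (by rw [← Set.preimage_iUnion, hSU, Set.preimage_univ]) hSfin hf
  exact ⟨E, hE1, fun s hs => hE2 _ ⟨s, hs, rfl⟩⟩

private lemma isCondExp_mono' {φ : X → X} (hφ : Measurable φ) {ν : Measure X}
    (S : ℕ → Set X) (hSm : ∀ n, MeasurableSet (S n))
    (hSU : (⋃ n, S n) = Set.univ) (hSfin : ∀ n, ν (φ ⁻¹' S n) < ∞)
    {f g E F : X → ℝ≥0∞} (hE : IsCondExp φ ν f E) (hF : IsCondExp φ ν g F)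
    (hfg : f ≤ᵐ[ν] g) : E ≤ᵐ[ν] F := by
  have hm := hφ.comap_le
  haveI hsf : SigmaFinite (ν.trim hm) := sigmaFinite_trim' hφ ν S hSm hSU hSfin
  refine ae_le_of_ae_le_trim (hm := hm) ?_
  refine @ae_le_of_forall_setLIntegral_le_of_sigmaFinite X (MeasurableSpace.comap φ inferInstance)
    (ν.trim hm) hsf _ _ hE.1 fun s hs _ => ?_
  obtain ⟨t, ht, rfl⟩ := hs
  rw [key_trim' hm ν hE.1 ⟨t, ht, rfl⟩, key_trim' hm ν hF.1 ⟨t, ht, rfl⟩, hE.2 t ht, hF.2 t ht]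
  exact lintegral_mono_ae (ae_restrict_of_ae hfg)

private lemma isCondExp_indicator' {φ : X → X} (hφ : Measurable φ) {ν : Measure X}
    {u E : X → ℝ≥0∞} (hE : IsCondExp φ ν u E) {t : Set X} (ht : MeasurableSet t) :
    IsCondExp φ ν ((φ ⁻¹' t).indicator u) ((φ ⁻¹' t).indicator E) := by
  refine ⟨hE.1.indicator ⟨t, ht, rfl⟩, fun s hs => ?_⟩
  rw [lintegral_indicator (hφ ht), lintegral_indicator (hφ ht),
    Measure.restrict_restrict (hφ ht),
    ← Set.preimage_inter, hE.2 (t ∩ s) (ht.inter hs)]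

private lemma isCondExp_combo' {φ : X → X} (hφ : Measurable φ) {ν : Measure X}
    {u v Eu Ev : X → ℝ≥0∞} (hu : IsCondExp φ ν u Eu) (hv : IsCondExp φ ν v Ev)
    (hum : Measurable u) (hvm : Measurable v) (e : ℝ≥0∞) :
    IsCondExp φ ν (fun x => (e * u x + e⁻¹ * v x) / 2)
      (fun x => (e * Eu x + e⁻¹ * Ev x) / 2) := by
  have hm := hφ.comap_le
  have hEum : Measurable Eu := hu.1.mono hm le_rfl
  have hEvm : Measurable Ev := hv.1.mono hm le_rfl
  have comp : ∀ (a b : X → ℝ≥0∞), Measurable a → Measurable b → ∀ A : Set X,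
      ∫⁻ x in A, (e * a x + e⁻¹ * b x) / 2 ∂ν
        = (e * ∫⁻ x in A, a x ∂ν + e⁻¹ * ∫⁻ x in A, b x ∂ν) / 2 := by
    intro a b ha hb A
    simp only [div_eq_mul_inv]
    rw [lintegral_mul_const (f := fun x => e * a x + e⁻¹ * b x) _
        ((ha.const_mul e).add (hb.const_mul e⁻¹)),
      lintegral_add_left (ha.const_mul e), lintegral_const_mul e ha,
      lintegral_const_mul e⁻¹ hb]
  constructor
  · exact ((hu.1.const_mul e).add (hv.1.const_mul e⁻¹)).div_const 2
  · intro s hs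
    rw [comp _ _ hEum hEvm, comp _ _ hum hvm, hu.2 s hs, hv.2 s hs]

/-- For nonnegative measurable `g₁, g₂`, the inequality
`∫ E_{φ,w}((g₁ f)^{1/2})² dμ_w ≤ ∫ g₂ f dμ_w` holds for all measurable `f ≥ 0`
iff `μ_w({g₁ ≠ 0} \ {g₂ ≠ 0}) = 0` and `E_{φ,w}(χ_{{g₂≠0}} g₁/g₂) ≤ 1` a.e. `[μ_w]`. -/
theorem aluthge_wco_herron
    (μ : Measure X) [SigmaFinite μ] (w : X → ℂ) (φ : X → X)
    (hw : Measurable w) (hφ : Measurable φ)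
    (habs : (wcMeasure μ w).map φ ≪ μ)
    (hfin : ∀ᵐ x ∂μ, wcDeriv μ w φ x < ⊤)
    (g₁ g₂ : X → ℝ≥0) (hg₁ : Measurable g₁) (hg₂ : Measurable g₂) :
    (∀ f : X → ℝ≥0∞, Measurable f → ∀ E : X → ℝ≥0∞,
      IsCondExp φ (wcMeasure μ w) (fun x => ((g₁ x : ℝ≥0∞) * f x) ^ (1 / 2 : ℝ)) E →
        ∫⁻ x, E x ^ 2 ∂(wcMeasure μ w) ≤ ∫⁻ x, (g₂ x : ℝ≥0∞) * f x ∂(wcMeasure μ w)) ↔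
    (wcMeasure μ w {x | g₁ x ≠ 0 ∧ g₂ x = 0} = 0 ∧
      ∀ E' : X → ℝ≥0∞,
        IsCondExp φ (wcMeasure μ w)
          (fun x => if g₂ x = 0 then 0 else ((g₁ x : ℝ≥0∞) / (g₂ x : ℝ≥0∞))) E' →
        ∀ᵐ x ∂(wcMeasure μ w), E' x ≤ 1) := by
  classical
  have hm := hφ.comap_le
  set ν : Measure X := wcMeasure μ w with hν_def
  -- σ-finiteness setup
  haveI hνsf : SigmaFinite ν := by
    rw [hν_def]
    unfold wcMeasure
    exact SigmaFinite.withDensity_of_ne_top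
      (ae_of_all _ fun x => ENNReal.pow_ne_top ENNReal.coe_ne_top)
  have hmapeq : μ.withDensity (wcDeriv μ w φ) = ν.map φ :=
    Measure.withDensity_rnDeriv_eq _ _ habs
  haveI hwd : SigmaFinite (μ.withDensity (wcDeriv μ w φ)) :=
    SigmaFinite.withDensity_of_ne_top (hfin.mono fun x hx => hx.ne)
  set S : ℕ → Set X := spanningSets (μ.withDensity (wcDeriv μ w φ)) with hS_def
  have hSm : ∀ n, MeasurableSet (S n) := measurableSet_spanningSets _
  have hSmono : Monotone S := monotone_spanningSets _
  have hSU : (⋃ n, S n) = Set.univ := iUnion_spanningSets _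
  have hSfin : ∀ n, ν (φ ⁻¹' S n) < ∞ := fun n => by
    rw [← Measure.map_apply hφ (hSm n), ← hmapeq]
    exact measure_spanningSets_lt_top _ n
  set A : Set X := {x | g₁ x ≠ 0 ∧ g₂ x = 0} with hA_def
  have hAm : MeasurableSet A :=
    ((hg₁ (measurableSet_singleton 0)).compl).inter (hg₂ (measurableSet_singleton 0))
  set u₀ : X → ℝ≥0 := fun x => if g₂ x = 0 then 0 else g₁ x / g₂ x with hu₀_def
  have hu₀m : Measurable u₀ :=
    Measurable.ite (hg₂ (measurableSet_singleton 0)) measurable_const (hg₁.div hg₂)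
  have hu_eq : (fun x => if g₂ x = 0 then 0 else ((g₁ x : ℝ≥0∞) / (g₂ x : ℝ≥0∞)))
      = fun x => ((u₀ x : ℝ≥0) : ℝ≥0∞) := by
    funext x
    by_cases h2 : g₂ x = 0
    · simp [hu₀_def, h2]
    · rw [if_neg h2, hu₀_def]
      simp only [if_neg h2]
      exact (ENNReal.coe_div h2).symm
  have hu₀0 : ∀ x, g₁ x = 0 → u₀ x = 0 := fun x h1 => by
    rw [hu₀_def]
    by_cases h2 : g₂ x = 0
    · simp [h2]
    · simp [h2, h1]
  have humc : Measurable fun x => ((u₀ x : ℝ≥0) : ℝ≥0∞) := hu₀m.coe_nnreal_ennreal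
  constructor
  · -- Forward direction
    intro Hyp
    constructor
    · -- ν A = 0
      set f : X → ℝ≥0∞ := fun x => ((A.indicator (fun x => (g₁ x)⁻¹) x : ℝ≥0) : ℝ≥0∞)
        with hf_def
      have hfm : Measurable f := (hg₁.inv.indicator hAm).coe_nnreal_ennreal
      set χA : X → ℝ≥0∞ := A.indicator (fun _ => (1 : ℝ≥0∞)) with hχ_def
      have hχm : Measurable χA := measurable_const.indicator hAm
      have hkey : (fun x => ((g₁ x : ℝ≥0∞) * f x) ^ (1 / 2 : ℝ)) = χA := by
        funext x
        by_cases hx : x ∈ A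
        · have h1 : g₁ x ≠ 0 := hx.1
          rw [hf_def, hχ_def]
          simp only [Set.indicator_of_mem hx]
          rw [← ENNReal.coe_mul]
          norm_num [mul_inv_cancel₀ h1]
        · rw [hf_def, hχ_def]
          simp only [Set.indicator_of_notMem hx, ENNReal.coe_zero, mul_zero]
          rw [ENNReal.zero_rpow_of_pos (by norm_num)]
      obtain ⟨E, hE⟩ := exists_isCondExp hφ ν S hSm hSmono hSU hSfin hχm
      rw [← hkey] at hE
      have h0 : ∫⁻ x, (g₂ x : ℝ≥0∞) * f x ∂ν = 0 := by
        have hz : ∀ x, (g₂ x : ℝ≥0∞) * f x = 0 := by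
          intro x
          by_cases hx : x ∈ A
          · have h2 : g₂ x = 0 := hx.2
            simp [h2]
          · simp [hf_def, Set.indicator_of_notMem hx]
        rw [lintegral_congr hz, lintegral_zero]
      have hE2 := Hyp f hfm E hE
      rw [h0, nonpos_iff_eq_zero] at hE2
      have hEmeas : Measurable E := hE.1.mono hm le_rfl
      have hE0 : E =ᵐ[ν] 0 := by
        have h2 : ∀ᵐ x ∂ν, E x ^ 2 = 0 := (lintegral_eq_zero_iff (hEmeas.pow_const 2)).mp hE2
        filter_upwards [h2] with x hx
        exact pow_eq_zero_iff two_ne_zero |>.mp hx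
      have h3 := hE.2 Set.univ MeasurableSet.univ
      rw [Set.preimage_univ, Measure.restrict_univ] at h3
      calc ν A = ∫⁻ x, χA x ∂ν := by
            rw [hχ_def, lintegral_indicator hAm, setLIntegral_const, one_mul]
      _ = ∫⁻ x, (fun x => ((g₁ x : ℝ≥0∞) * f x) ^ (1 / 2 : ℝ)) x ∂ν := by rw [hkey]
      _ = ∫⁻ x, E x ∂ν := h3.symm
      _ = 0 := by rw [lintegral_congr_ae hE0]; simp
    · -- E' ≤ 1 a.e.
      intro E' hE'
      rw [hu_eq] at hE'
      have hE'meas : Measurable E' := hE'.1.mono hm le_rfl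
      -- the truncated sets
      have hBfin : ∀ n k : ℕ,
          ν ({x | 1 + ((n : ℝ≥0∞) + 1)⁻¹ ≤ E' x ∧ E' x ≤ (n : ℝ≥0∞) + 1} ∩ φ ⁻¹' S k) = 0 := by
        intro n k
        set c : ℝ≥0∞ := 1 + ((n : ℝ≥0∞) + 1)⁻¹ with hc_def
        set B : Set X := {x | c ≤ E' x ∧ E' x ≤ (n : ℝ≥0∞) + 1} ∩ φ ⁻¹' S k with hB_def
        have hBm' : MeasurableSet[MeasurableSpace.comap φ inferInstance] B := by
          refine MeasurableSet.inter ?_ ⟨S k, hSm k, rfl⟩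
          exact (hE'.1 measurableSet_Ici).inter (hE'.1 measurableSet_Iic)
        obtain ⟨t, htm, htB⟩ := hBm'
        have hBm : MeasurableSet B := hm _ ⟨t, htm, htB⟩
        set fB : X → ℝ≥0∞ := fun x =>
          ((B.indicator (fun x => if g₁ x = 0 then 0 else (u₀ x) ^ 2 / g₁ x) x : ℝ≥0) : ℝ≥0∞)
          with hfB_def
        have hfBm : Measurable fB := by
          refine Measurable.coe_nnreal_ennreal (Measurable.indicator ?_ hBm)
          exact Measurable.ite (hg₁ (measurableSet_singleton 0)) measurable_const
            ((hu₀m.pow_const 2).div hg₁)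
        have hkey1 : (fun x => ((g₁ x : ℝ≥0∞) * fB x) ^ (1 / 2 : ℝ))
            = B.indicator (fun x => ((u₀ x : ℝ≥0) : ℝ≥0∞)) := by
          funext x
          by_cases hx : x ∈ B
          · rw [hfB_def]
            simp only [Set.indicator_of_mem hx]
            rw [← ENNReal.coe_mul, nnreal_aux2 (g₁ x) (u₀ x) (hu₀0 x), ENNReal.coe_pow,
              sq_rpow_half]
          · rw [hfB_def]
            simp only [Set.indicator_of_notMem hx, ENNReal.coe_zero, mul_zero]
            rw [ENNReal.zero_rpow_of_pos (by norm_num)]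
        have hcond : IsCondExp φ ν (fun x => ((g₁ x : ℝ≥0∞) * fB x) ^ (1 / 2 : ℝ))
            (B.indicator E') := by
          have h1 := isCondExp_indicator' hφ hE' htm
          rw [htB] at h1
          rw [hkey1]
          exact h1
        have hHyp := Hyp fB hfBm _ hcond
        have hRHS : ∫⁻ x, (g₂ x : ℝ≥0∞) * fB x ∂ν ≤ ∫⁻ x in B, ((u₀ x : ℝ≥0) : ℝ≥0∞) ∂ν := by
          rw [← lintegral_indicator hBm]
          refine lintegral_mono fun x => ?_
          by_cases hx : x ∈ B
          · rw [hfB_def]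
            simp only [Set.indicator_of_mem hx]
            rw [← ENNReal.coe_mul]
            refine ENNReal.coe_le_coe.mpr (nnreal_aux (g₁ x) (g₂ x) (u₀ x) fun h2 => ?_)
            rw [hu₀_def]
            simp [h2]
          · rw [hfB_def]
            simp [Set.indicator_of_notMem hx]
        have hBu : ∫⁻ x in B, ((u₀ x : ℝ≥0) : ℝ≥0∞) ∂ν = ∫⁻ x in B, E' x ∂ν := by
          have h1 := hE'.2 t htm
          rw [htB] at h1
          exact h1.symm
        have hLHS : ∫⁻ x in B, E' x ^ 2 ∂ν ≤ ∫⁻ x, (B.indicator E') x ^ 2 ∂ν := by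
          rw [← lintegral_indicator hBm]
          refine lintegral_mono fun x => ?_
          by_cases hx : x ∈ B
          · simp [Set.indicator_of_mem hx]
          · simp [Set.indicator_of_notMem hx]
        have hchain : ∫⁻ x in B, E' x ^ 2 ∂ν ≤ ∫⁻ x in B, E' x ∂ν :=
          le_trans hLHS (le_trans hHyp (hRHS.trans_eq hBu))
        have hlow : c * ∫⁻ x in B, E' x ∂ν ≤ ∫⁻ x in B, E' x ^ 2 ∂ν := by
          rw [← lintegral_const_mul c hE'meas]
          refine lintegral_mono_ae ?_
          filter_upwards [ae_restrict_mem hBm] with x hx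
          calc c * E' x ≤ E' x * E' x := mul_le_mul' hx.1.1 le_rfl
          _ = E' x ^ 2 := (sq _).symm
        have hfinI : ∫⁻ x in B, E' x ∂ν < ∞ := by
          calc ∫⁻ x in B, E' x ∂ν ≤ ∫⁻ _ in B, ((n : ℝ≥0∞) + 1) ∂ν := by
                refine lintegral_mono_ae ?_
                filter_upwards [ae_restrict_mem hBm] with x hx using hx.1.2
          _ = ((n : ℝ≥0∞) + 1) * ν B := setLIntegral_const _ _
          _ ≤ ((n : ℝ≥0∞) + 1) * ν (φ ⁻¹' S k) :=
              mul_le_mul_right (measure_mono Set.inter_subset_right) _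
          _ < ∞ := ENNReal.mul_lt_top
              (ENNReal.add_lt_top.mpr ⟨ENNReal.natCast_lt_top n, ENNReal.one_lt_top⟩)
              (hSfin k)
        have hI0 : ∫⁻ x in B, E' x ∂ν = 0 := by
          by_contra hI
          have h2 : c * ∫⁻ x in B, E' x ∂ν ≤ 1 * ∫⁻ x in B, E' x ∂ν := by
            rw [one_mul]; exact le_trans hlow hchain
          have h3 : c ≤ 1 := (ENNReal.mul_le_mul_iff_left hI hfinI.ne).mp h2
          rw [hc_def] at h3
          have h4 : ((n : ℝ≥0∞) + 1)⁻¹ ≤ 0 := by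
            have h5 : (1 : ℝ≥0∞) + ((n : ℝ≥0∞) + 1)⁻¹ ≤ 1 + 0 := by rwa [add_zero]
            exact (ENNReal.add_le_add_iff_left ENNReal.one_ne_top).mp h5
          have h6 : ((n : ℝ≥0∞) + 1)⁻¹ = 0 := le_antisymm h4 (zero_le)
          rw [ENNReal.inv_eq_zero] at h6
          exact (ENNReal.add_lt_top.mpr
            ⟨ENNReal.natCast_lt_top n, ENNReal.one_lt_top⟩).ne h6
        have h7 : ν B ≤ ∫⁻ x in B, E' x ∂ν := by
          calc ν B = ∫⁻ _ in B, 1 ∂ν := (setLIntegral_one _).symm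
          _ ≤ ∫⁻ x in B, E' x ∂ν := by
              refine lintegral_mono_ae ?_
              filter_upwards [ae_restrict_mem hBm] with x hx
              exact le_trans le_self_add hx.1.1
        rw [hI0] at h7
        exact nonpos_iff_eq_zero.mp h7
      have hB'null : ∀ k : ℕ, ν ({x | E' x = ∞} ∩ φ ⁻¹' S k) = 0 := by
        intro k
        set B : Set X := {x | E' x = ∞} ∩ φ ⁻¹' S k with hB_def
        have hBm' : MeasurableSet[MeasurableSpace.comap φ inferInstance] B :=
          (hE'.1 (measurableSet_singleton ∞)).inter ⟨S k, hSm k, rfl⟩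
        obtain ⟨t, htm, htB⟩ := hBm'
        have hBm : MeasurableSet B := hm _ ⟨t, htm, htB⟩
        by_contra hν0
        have hνBfin : ν B < ∞ :=
          lt_of_le_of_lt (measure_mono Set.inter_subset_right) (hSfin k)
        have key : ∀ M : ℕ, (∫⁻ x in B, ((min (u₀ x) M : ℝ≥0) : ℝ≥0∞) ∂ν) ≤ ν B := by
          intro M
          set fB : X → ℝ≥0∞ := fun x =>
            ((B.indicator (fun x => if g₁ x = 0 then 0 else (min (u₀ x) M) ^ 2 / g₁ x) x
              : ℝ≥0) : ℝ≥0∞) with hfB_def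
          have hfBm : Measurable fB := by
            refine Measurable.coe_nnreal_ennreal (Measurable.indicator ?_ hBm)
            exact Measurable.ite (hg₁ (measurableSet_singleton 0)) measurable_const
              (((hu₀m.min measurable_const).pow_const 2).div hg₁)
          have hmin0 : ∀ x, g₁ x = 0 → min (u₀ x) M = 0 := fun x h => by
            rw [hu₀0 x h]
            exact min_eq_left (zero_le)
          have hkey1 : (fun x => ((g₁ x : ℝ≥0∞) * fB x) ^ (1 / 2 : ℝ))
              = B.indicator (fun x => ((min (u₀ x) M : ℝ≥0) : ℝ≥0∞)) := by
            funext x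
            by_cases hx : x ∈ B
            · rw [hfB_def]
              simp only [Set.indicator_of_mem hx]
              rw [← ENNReal.coe_mul, nnreal_aux2 (g₁ x) _ (hmin0 x), ENNReal.coe_pow,
                sq_rpow_half]
            · rw [hfB_def]
              simp only [Set.indicator_of_notMem hx, ENNReal.coe_zero, mul_zero]
              rw [ENNReal.zero_rpow_of_pos (by norm_num)]
          have hGm : Measurable (B.indicator (fun x => ((min (u₀ x) M : ℝ≥0) : ℝ≥0∞))) :=
            ((hu₀m.min measurable_const).coe_nnreal_ennreal).indicator hBm
          obtain ⟨E, hEc⟩ := exists_isCondExp hφ ν S hSm hSmono hSU hSfin hGm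
          rw [← hkey1] at hEc
          have hHyp := Hyp fB hfBm E hEc
          have hRHS : ∫⁻ x, (g₂ x : ℝ≥0∞) * fB x ∂ν
              ≤ ∫⁻ x in B, ((min (u₀ x) M : ℝ≥0) : ℝ≥0∞) ∂ν := by
            rw [← lintegral_indicator hBm]
            refine lintegral_mono fun x => ?_
            by_cases hx : x ∈ B
            · rw [hfB_def]
              simp only [Set.indicator_of_mem hx]
              rw [← ENNReal.coe_mul]
              refine ENNReal.coe_le_coe.mpr (nnreal_aux (g₁ x) (g₂ x) _ fun h2 => ?_)
              refine le_trans (min_le_left _ _) ?_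
              rw [hu₀_def]
              simp [h2]
            · rw [hfB_def]
              simp [Set.indicator_of_notMem hx]
          set IM := ∫⁻ x in B, ((min (u₀ x) M : ℝ≥0) : ℝ≥0∞) ∂ν with hIM_def
          have hIM_fin : IM < ∞ := by
            calc IM ≤ ∫⁻ _ in B, ((M : ℝ≥0) : ℝ≥0∞) ∂ν := by
                  refine lintegral_mono fun x => ?_
                  exact ENNReal.coe_le_coe.mpr (min_le_right _ _)
            _ = ((M : ℝ≥0) : ℝ≥0∞) * ν B := setLIntegral_const _ _
            _ < ∞ := ENNReal.mul_lt_top ENNReal.coe_lt_top hνBfin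
          have hIB : ∫⁻ x in B, E x ∂ν = IM := by
            have h1 := hEc.2 t htm
            rw [htB] at h1
            rw [h1, hkey1, hIM_def]
            refine lintegral_congr_ae ?_
            filter_upwards [ae_restrict_mem hBm] with x hx
            rw [Set.indicator_of_mem hx]
          have hEmeas : Measurable E := hEc.1.mono hm le_rfl
          have hconj : Real.HolderConjugate 2 2 := Real.HolderConjugate.two_two
          have hCS : IM ≤ IM ^ (1 / 2 : ℝ) * (ν B) ^ (1 / 2 : ℝ) := by
            have h2 := ENNReal.lintegral_mul_le_Lp_mul_Lq ν hconj hEmeas.aemeasurable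
              ((measurable_one.indicator hBm).aemeasurable :
                AEMeasurable (B.indicator (1 : X → ℝ≥0∞)) ν)
            have h3 : ∫⁻ a, (E * B.indicator (1 : X → ℝ≥0∞)) a ∂ν = IM := by
              rw [← hIB, ← lintegral_indicator hBm]
              refine lintegral_congr fun x => ?_
              by_cases hx : x ∈ B
              · simp [Set.indicator_of_mem hx]
              · simp [Set.indicator_of_notMem hx]
            have h4 : ∫⁻ a, E a ^ (2 : ℝ) ∂ν ≤ IM := by
              have h5 : ∫⁻ a, E a ^ (2 : ℝ) ∂ν = ∫⁻ a, E a ^ 2 ∂ν := by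
                refine lintegral_congr fun x => ?_
                rw [← ENNReal.rpow_natCast (E x) 2]
                norm_num
              rw [h5]
              exact le_trans hHyp hRHS
            have h6 : ∫⁻ a, (B.indicator (1 : X → ℝ≥0∞)) a ^ (2 : ℝ) ∂ν = ν B := by
              have h7 : ∀ x, (B.indicator (1 : X → ℝ≥0∞)) x ^ (2 : ℝ)
                  = B.indicator (1 : X → ℝ≥0∞) x := by
                intro x
                by_cases hx : x ∈ B
                · simp [Set.indicator_of_mem hx]
                · simp only [Set.indicator_of_notMem hx]
                  rw [ENNReal.zero_rpow_of_pos (by norm_num)]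
              rw [lintegral_congr h7, lintegral_indicator hBm]
              simp
            rw [h3, h6] at h2
            refine le_trans h2 ?_
            exact mul_le_mul_left (ENNReal.rpow_le_rpow h4 (by norm_num)) _
          by_cases hIM0 : IM = 0
          · calc IM = 0 := hIM0
            _ ≤ ν B := zero_le
          have hIMr0 : IM ^ (1 / 2 : ℝ) ≠ 0 := by
            simp [ENNReal.rpow_eq_zero_iff, hIM0, hIM_fin.ne]
          have hIMrt : IM ^ (1 / 2 : ℝ) ≠ ∞ := by
            simp [ENNReal.rpow_eq_top_iff, hIM0, hIM_fin.ne]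
          have h8 : IM ^ (1 / 2 : ℝ) * IM ^ (1 / 2 : ℝ) ≤ IM ^ (1 / 2 : ℝ) * (ν B) ^ (1 / 2 : ℝ) := by
            refine le_trans ?_ hCS
            rw [← ENNReal.rpow_add _ _ hIM0 hIM_fin.ne]
            norm_num
          have h9 : IM ^ (1 / 2 : ℝ) ≤ (ν B) ^ (1 / 2 : ℝ) :=
            (ENNReal.mul_le_mul_iff_right hIMr0 hIMrt).mp h8
          calc IM = (IM ^ (1 / 2 : ℝ)) ^ 2 := (rpow_half_sq IM).symm
          _ ≤ ((ν B) ^ (1 / 2 : ℝ)) ^ 2 := pow_le_pow_left' h9 2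
          _ = ν B := rpow_half_sq _
        -- sup over M gives a contradiction
        have hmono : Monotone fun M : ℕ => fun x => ((min (u₀ x) M : ℝ≥0) : ℝ≥0∞) := by
          intro i j hij x
          exact ENNReal.coe_le_coe.mpr (min_le_min le_rfl (by exact_mod_cast hij))
        have hsup : (⨆ M : ℕ, ∫⁻ x in B, ((min (u₀ x) M : ℝ≥0) : ℝ≥0∞) ∂ν)
            = ∫⁻ x in B, ((u₀ x : ℝ≥0) : ℝ≥0∞) ∂ν := by
          rw [← lintegral_iSup (fun M => (hu₀m.min measurable_const).coe_nnreal_ennreal) hmono]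
          refine lintegral_congr fun x => ?_
          refine le_antisymm (iSup_le fun M => ENNReal.coe_le_coe.mpr (min_le_left _ _)) ?_
          obtain ⟨M, hM⟩ := exists_nat_ge (u₀ x)
          refine le_trans ?_
            (le_iSup (fun M : ℕ => ((min (u₀ x) (M : ℝ≥0) : ℝ≥0) : ℝ≥0∞)) M)
          rw [min_eq_left hM]
        have hEB : ∫⁻ x in B, ((u₀ x : ℝ≥0) : ℝ≥0∞) ∂ν = ∫⁻ x in B, E' x ∂ν := by
          have h1 := hE'.2 t htm
          rw [htB] at h1
          exact h1.symm
        have hinf : ∫⁻ x in B, E' x ∂ν = ∞ := by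
          have h1 : ∫⁻ x in B, E' x ∂ν = ∫⁻ _ in B, (∞ : ℝ≥0∞) ∂ν := by
            refine lintegral_congr_ae ?_
            filter_upwards [ae_restrict_mem hBm] with x hx
            exact hx.1
          rw [h1, setLIntegral_const, ENNReal.top_mul hν0]
        have hcontra : (∞ : ℝ≥0∞) ≤ ν B := by
          rw [← hinf, ← hEB, ← hsup]
          exact iSup_le key
        exact absurd (lt_of_le_of_lt hcontra hνBfin) (lt_irrefl _)
      -- combine
      rw [ae_iff]
      refine measure_mono_null (fun x hx => ?_)
        (measure_union_null
          (measure_iUnion_null fun n => measure_iUnion_null fun k => hBfin n k)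
          (measure_iUnion_null hB'null))
      simp only [Set.mem_setOf_eq, not_le] at hx
      have hxU : ∃ k, x ∈ φ ⁻¹' S k := by
        have : φ x ∈ ⋃ n, S n := hSU ▸ Set.mem_univ _
        simpa using this
      obtain ⟨k, hk⟩ := hxU
      rcases eq_or_ne (E' x) ∞ with hEx | hEx
      · exact Or.inr (Set.mem_iUnion.mpr ⟨k, ⟨hEx, hk⟩⟩)
      · obtain ⟨n₁, hn₁⟩ := ENNReal.exists_nat_gt hEx
        obtain ⟨ε, hε, hεlt⟩ := ENNReal.lt_iff_exists_add_pos_lt.mp hx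
        obtain ⟨n₂, hn₂⟩ := ENNReal.exists_inv_nat_lt (a := (ε : ℝ≥0∞))
          (by exact_mod_cast hε.ne')
        refine Or.inl (Set.mem_iUnion.mpr ⟨max n₁ n₂, Set.mem_iUnion.mpr ⟨k, ⟨⟨?_, ?_⟩, hk⟩⟩⟩)
        · have h1 : ((max n₁ n₂ : ℕ) : ℝ≥0∞) + 1 ≥ (n₂ : ℝ≥0∞) := by
            refine le_trans ?_ le_self_add
            exact_mod_cast le_max_right n₁ n₂
          have h2 : (((max n₁ n₂ : ℕ) : ℝ≥0∞) + 1)⁻¹ ≤ (n₂ : ℝ≥0∞)⁻¹ :=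
            ENNReal.inv_le_inv.mpr h1
          calc 1 + (((max n₁ n₂ : ℕ) : ℝ≥0∞) + 1)⁻¹ ≤ 1 + (ε : ℝ≥0∞) :=
                add_le_add le_rfl (le_trans h2 hn₂.le)
          _ ≤ E' x := hεlt.le
        · calc E' x ≤ (n₁ : ℝ≥0∞) := hn₁.le
          _ ≤ ((max n₁ n₂ : ℕ) : ℝ≥0∞) := by exact_mod_cast le_max_left n₁ n₂
          _ ≤ ((max n₁ n₂ : ℕ) : ℝ≥0∞) + 1 := le_self_add
  · -- Backward direction
    rintro ⟨hA0, hcond2⟩ f hf E hE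
    have humeas : Measurable fun x => if g₂ x = 0 then 0 else ((g₁ x : ℝ≥0∞) / (g₂ x : ℝ≥0∞)) := by
      rw [hu_eq]
      exact humc
    have hvmeas : Measurable fun x => (g₂ x : ℝ≥0∞) * f x := hg₂.coe_nnreal_ennreal.mul hf
    obtain ⟨Eu, hEu⟩ := exists_isCondExp hφ ν S hSm hSmono hSU hSfin humeas
    obtain ⟨Ev, hEv⟩ := exists_isCondExp hφ ν S hSm hSmono hSU hSfin hvmeas
    have hEu1 : ∀ᵐ x ∂ν, Eu x ≤ 1 := hcond2 Eu hEu
    have hA0' : ∀ᵐ x ∂ν, ¬(g₁ x ≠ 0 ∧ g₂ x = 0) := by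
      rw [ae_iff]
      have hset : {x | ¬¬(g₁ x ≠ 0 ∧ g₂ x = 0)} = A := by
        ext x; simp [hA_def]
      rw [hset]
      exact hA0
    have hmono_q : ∀ q : ℚ, 0 < q → E ≤ᵐ[ν] fun x =>
        (ENNReal.ofReal q * Eu x + (ENNReal.ofReal q)⁻¹ * Ev x) / 2 := by
      intro q hq
      have he0 : (ENNReal.ofReal q) ≠ 0 := by
        simp only [ne_eq, ENNReal.ofReal_eq_zero, not_le]
        exact_mod_cast hq
      have het : (ENNReal.ofReal q) ≠ ∞ := ENNReal.ofReal_ne_top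
      refine isCondExp_mono' hφ S hSm hSU hSfin hE
        (isCondExp_combo' hφ hEu hEv humeas hvmeas (ENNReal.ofReal q)) ?_
      filter_upwards [hA0'] with x hx
      have hprod : (g₁ x : ℝ≥0∞) * f x
          = (if g₂ x = 0 then 0 else ((g₁ x : ℝ≥0∞) / (g₂ x : ℝ≥0∞)))
            * ((g₂ x : ℝ≥0∞) * f x) := by
        by_cases h2 : g₂ x = 0
        · have h1 : g₁ x = 0 := by
            by_contra h1
            exact hx ⟨h1, h2⟩
          simp [h1, h2]
        · rw [if_neg h2, div_eq_mul_inv]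
          have h3 : ((g₂ x : ℝ≥0∞))⁻¹ * (g₂ x : ℝ≥0∞) = 1 :=
            ENNReal.inv_mul_cancel (by exact_mod_cast h2) ENNReal.coe_ne_top
          calc (g₁ x : ℝ≥0∞) * f x = (g₁ x : ℝ≥0∞) * 1 * f x := by rw [mul_one]
          _ = (g₁ x : ℝ≥0∞) * ((g₂ x : ℝ≥0∞)⁻¹ * (g₂ x : ℝ≥0∞)) * f x := by rw [h3]
          _ = (g₁ x : ℝ≥0∞) * (g₂ x : ℝ≥0∞)⁻¹ * ((g₂ x : ℝ≥0∞) * f x) := by ring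
      show ((g₁ x : ℝ≥0∞) * f x) ^ (1 / 2 : ℝ)
        ≤ (ENNReal.ofReal q * ((if g₂ x = 0 then 0 else ((g₁ x : ℝ≥0∞) / (g₂ x : ℝ≥0∞))))
            + (ENNReal.ofReal q)⁻¹ * ((g₂ x : ℝ≥0∞) * f x)) / 2
      rw [hprod]
      exact geom_mean_le he0 het _ _
    have hall : ∀ᵐ x ∂ν, ∀ q : ℚ, 0 < q →
        E x ≤ (ENNReal.ofReal q * Eu x + (ENNReal.ofReal q)⁻¹ * Ev x) / 2 := by
      rw [ae_all_iff]
      intro q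
      by_cases hq : 0 < q
      · filter_upwards [hmono_q q hq] with x hx _
        exact hx
      · filter_upwards with x hq'
        exact absurd hq' hq
    have hsq : ∀ᵐ x ∂ν, E x ^ 2 ≤ Ev x := by
      filter_upwards [hall, hEu1] with x hx hb
      exact sq_le_of_forall hb fun q hq => hx q hq
    calc ∫⁻ x, E x ^ 2 ∂ν ≤ ∫⁻ x, Ev x ∂ν := lintegral_mono_ae hsq
    _ = ∫⁻ x, (g₂ x : ℝ≥0∞) * f x ∂ν := by
        have h1 := hEv.2 Set.univ MeasurableSet.univ
        rwa [Set.preimage_univ, Measure.restrict_univ] at h1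
end

section
/- Assume the standing hypotheses with $C_{\phi,w}$ densely defined. If $C_{\phi,w}$ is $p$-hyponormal for some $p\in(0,\infty)$, then $C_{\phi,w}$ is $q$-hyponormal for every $q\in(0,p)$. Equivalently, in the characterization via conditional expectations: if $\mathsf{h}_{\phi,w}>0$ a.e. $[\mu_w]$ and $\mathsf{E}_{\phi,w}((\mathsf{h}_{\phi,w}^p\circ\phi)/\mathsf{h}_{\phi,w}^p)\le1$ a.e. $[\mu_w]$, then $\mathsf{E}_{\phi,w}((\mathsf{h}_{\phi,w}^q\circ\phi)/\mathsf{h}_{\phi,w}^q)\le1$ a.e. $[\mu_w]$ for all $0<q<p$. -/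
open MeasureTheory ENNReal NNReal Filter Topology

variable {X : Type*} [MeasurableSpace X]

/-- Tangent-line (Bernoulli) inequality in `ℝ≥0∞`: `r·t ≤ t^r + (r-1)` for `r ≥ 1`, `t ≠ ∞`. -/
private lemma wco_tangent_aux {r : ℝ} (hr : 1 ≤ r) {t : ℝ≥0∞} (ht : t ≠ ⊤) :
    ENNReal.ofReal r * t ≤ t ^ r + ENNReal.ofReal (r - 1) := by
  have h0r : (0:ℝ) ≤ r := zero_le_one.trans hr
  have hu0 : 0 ≤ t.toReal := ENNReal.toReal_nonneg
  have hb : 1 + r * (t.toReal - 1) ≤ t.toReal ^ r := by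
    have := one_add_mul_self_le_rpow_one_add (s := t.toReal - 1) (by linarith) hr
    rwa [show (1:ℝ) + (t.toReal - 1) = t.toReal by ring] at this
  have hur : 0 ≤ t.toReal ^ r := Real.rpow_nonneg hu0 r
  nth_rewrite 1 [← ENNReal.ofReal_toReal ht]
  rw [← ENNReal.ofReal_mul h0r]
  calc ENNReal.ofReal (r * t.toReal)
      ≤ ENNReal.ofReal (t.toReal ^ r + (r - 1)) := ENNReal.ofReal_le_ofReal (by linarith)
    _ = ENNReal.ofReal (t.toReal ^ r) + ENNReal.ofReal (r - 1) :=
        ENNReal.ofReal_add hur (by linarith)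
    _ = t ^ r + ENNReal.ofReal (r - 1) := by
        rw [← ENNReal.ofReal_rpow_of_nonneg hu0 h0r, ENNReal.ofReal_toReal ht]

/-- Set-lintegral of an `m`-measurable function over an `m`-measurable set is the same for a
measure and its trim. -/
private lemma wco_setLIntegral_trim {α : Type*} {m m0 : MeasurableSpace α} (hm : m ≤ m0)
    (ν : MeasureTheory.Measure α) {f : α → ℝ≥0∞} (hf : Measurable[m] f)
    {t : Set α} (ht : MeasurableSet[m] t) :
    ∫⁻ x in t, f x ∂(ν.trim hm) = ∫⁻ x in t, f x ∂ν := by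
  rw [← MeasureTheory.lintegral_indicator ht, ← MeasureTheory.lintegral_indicator (hm t ht),
    MeasureTheory.lintegral_trim hm (hf.indicator ht)]

/-- `p`-hyponormality implies `q`-hyponormality for `0 < q < p`, in the
characterization via conditional expectations: if `h_{φ,w} > 0` a.e. `[μ_w]` and
`E_{φ,w}((h^p∘φ)/h^p) ≤ 1` a.e. `[μ_w]`, then `E_{φ,w}((h^q∘φ)/h^q) ≤ 1` a.e. `[μ_w]`. -/
theorem aluthge_wco_p_hyponormal_mono
    (μ : Measure X) [SigmaFinite μ] (w : X → ℂ) (φ : X → X)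
    (hw : Measurable w) (hφ : Measurable φ)
    (habs : (wcMeasure μ w).map φ ≪ μ)
    (hfin : ∀ᵐ x ∂μ, wcDeriv μ w φ x < ⊤)
    (p q : ℝ) (hq : 0 < q) (hqp : q < p)
    (hpos : ∀ᵐ x ∂(wcMeasure μ w), 0 < wcDeriv μ w φ x)
    (hhyp : ∀ E : X → ℝ≥0∞,
      IsCondExp φ (wcMeasure μ w)
        (fun x => wcDeriv μ w φ (φ x) ^ p / wcDeriv μ w φ x ^ p) E →
      ∀ᵐ x ∂(wcMeasure μ w), E x ≤ 1) :
    ∀ E : X → ℝ≥0∞,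
      IsCondExp φ (wcMeasure μ w)
        (fun x => wcDeriv μ w φ (φ x) ^ q / wcDeriv μ w φ x ^ q) E →
      ∀ᵐ x ∂(wcMeasure μ w), E x ≤ 1 := by
  intro E hE
  classical
  have hm : MeasurableSpace.comap φ inferInstance ≤ (inferInstance : MeasurableSpace X) := by
    rintro s ⟨t, ht, rfl⟩; exact hφ ht
  set ν := wcMeasure μ w with hνdef
  set h := wcDeriv μ w φ with hhdef
  haveI hνsf : SFinite ν := by rw [hνdef]; unfold wcMeasure; infer_instance
  have hνμ : ν ≪ μ := by rw [hνdef]; unfold wcMeasure; exact withDensity_absolutelyContinuous μ _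
  have hmh : Measurable h := Measure.measurable_rnDeriv _ _
  have hmhp : Measurable fun x => h x ^ p := ENNReal.continuous_rpow_const.measurable.comp hmh
  have hmhq : Measurable fun x => h x ^ q := ENNReal.continuous_rpow_const.measurable.comp hmh
  have hmhpφ : Measurable fun x => h (φ x) ^ p := hmhp.comp hφ
  have hmap : ν.map φ = μ.withDensity h := by
    rw [hhdef]; unfold wcDeriv; rw [← hνdef]
    exact (Measure.withDensity_rnDeriv_eq _ _ habs).symm
  haveI hβσ : SigmaFinite (μ.withDensity h) :=
    SigmaFinite.withDensity_of_ne_top (hfin.mono fun x hx => hx.ne)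
  haveI htrimσ : SigmaFinite (ν.trim hm) := by
    refine ⟨⟨⟨fun n => φ ⁻¹' spanningSets (μ.withDensity h) n, fun n => trivial, fun n => ?_, ?_⟩⟩⟩
    · rw [trim_measurableSet_eq hm ⟨_, measurableSet_spanningSets _ n, rfl⟩,
        ← Measure.map_apply hφ (measurableSet_spanningSets _ n), hmap]
      exact measure_spanningSets_lt_top _ n
    · rw [← Set.preimage_iUnion, iUnion_spanningSets, Set.preimage_univ]
  set lam := ν.withDensity (fun x => (h x ^ p)⁻¹) with hlamdef
  haveI : SFinite lam := by rw [hlamdef]; infer_instance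
  set τ := (lam.map φ).withDensity (fun y => h y ^ p) with hτdef
  have hτabs : τ ≪ μ.withDensity h := by
    refine (withDensity_absolutelyContinuous _ _).trans ?_
    rw [← hmap]
    exact (withDensity_absolutelyContinuous ν _).map hφ
  haveI : SFinite τ := by rw [hτdef]; infer_instance
  set g := τ.rnDeriv (μ.withDensity h) with hgdef
  have hmg : Measurable g := Measure.measurable_rnDeriv _ _
  have hτeq : (μ.withDensity h).withDensity g = τ := Measure.withDensity_rnDeriv_eq _ _ hτabs
  have hint : ∀ s : Set X, MeasurableSet s →
      ∫⁻ x in φ ⁻¹' s, g (φ x) ∂ν = ∫⁻ x in φ ⁻¹' s, h (φ x) ^ p / h x ^ p ∂ν := by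
    intro s hs
    rw [← setLIntegral_map hs hmg hφ, hmap, ← withDensity_apply g hs, hτeq, hτdef,
      withDensity_apply _ hs, setLIntegral_map hs hmhp hφ, hlamdef,
      setLIntegral_withDensity_eq_setLIntegral_mul ν (f := fun x => (h x ^ p)⁻¹) hmhp.inv hmhpφ (hφ hs)]
    exact lintegral_congr fun x => (ENNReal.div_eq_inv_mul).symm
  have hEp : IsCondExp φ ν (fun x => h (φ x) ^ p / h x ^ p) (fun x => g (φ x)) := by
    refine ⟨fun t ht => ⟨g ⁻¹' t, hmg ht, rfl⟩, hint⟩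
  have hEp1 : ∀ᵐ x ∂ν, g (φ x) ≤ 1 := hhyp _ hEp
  have hr1 : 1 < p / q := (one_lt_div hq).mpr hqp
  set r := p / q with hrdef
  have hr0 : (0:ℝ) < r := lt_trans one_pos hr1
  have hqr : q * r = p := by rw [hrdef]; field_simp
  have hfinν : ∀ᵐ x ∂ν, h x < ⊤ := hνμ.ae_le hfin
  have hfinφ : ∀ᵐ x ∂ν, h (φ x) < ⊤ := by
    have hNset : {y | ¬ h y < ⊤} = h ⁻¹' {⊤} := by
      ext y; simp [lt_top_iff_ne_top, not_not]
    have hN : MeasurableSet {y | ¬ h y < ⊤} := hNset ▸ hmh (measurableSet_singleton ⊤)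
    have hμN : μ {y | ¬ h y < ⊤} = 0 := ae_iff.mp hfin
    rw [ae_iff]
    have hpre : {x | ¬ h (φ x) < ⊤} = φ ⁻¹' {y | ¬ h y < ⊤} := rfl
    rw [hpre, ← Measure.map_apply hφ hN, hmap, withDensity_apply _ hN]
    exact setLIntegral_measure_zero _ _ hμN
  have hptw : ∀ᵐ x ∂ν, ENNReal.ofReal r * (h (φ x) ^ q / h x ^ q)
      ≤ h (φ x) ^ p / h x ^ p + ENNReal.ofReal (r - 1) := by
    filter_upwards [hpos, hfinν, hfinφ] with x hb0 hbt hat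
    have hden0 : h x ^ q ≠ 0 := (ENNReal.rpow_pos hb0 hbt.ne).ne'
    have hnum : h (φ x) ^ q ≠ ⊤ := ENNReal.rpow_ne_top_of_nonneg hq.le hat.ne
    have htne : h (φ x) ^ q / h x ^ q ≠ ⊤ := (ENNReal.div_lt_top hnum hden0).ne
    have hpow : (h (φ x) ^ q / h x ^ q) ^ r = h (φ x) ^ p / h x ^ p := by
      rw [ENNReal.div_rpow_of_nonneg _ _ hr0.le, ← ENNReal.rpow_mul, ← ENNReal.rpow_mul, hqr]
    calc ENNReal.ofReal r * (h (φ x) ^ q / h x ^ q)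
        ≤ (h (φ x) ^ q / h x ^ q) ^ r + ENNReal.ofReal (r - 1) := wco_tangent_aux hr1.le htne
      _ = _ := by rw [hpow]
  have hEmeas : Measurable E := hE.1.mono hm le_rfl
  have hfq : Measurable fun x => h (φ x) ^ q / h x ^ q := (hmhq.comp hφ).div hmhq
  have hle : (fun x => ENNReal.ofReal r * E x) ≤ᵐ[ν]
      fun x => g (φ x) + ENNReal.ofReal (r - 1) := by
    refine ae_le_of_ae_le_trim (hm := hm)
      (ae_le_of_forall_setLIntegral_le_of_sigmaFinite (hE.1.const_mul _) ?_)
    rintro t ⟨s, hs, rfl⟩ _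
    rw [wco_setLIntegral_trim hm ν (hE.1.const_mul _) ⟨s, hs, rfl⟩,
      wco_setLIntegral_trim hm ν (hEp.1.add_const _) ⟨s, hs, rfl⟩]
    calc ∫⁻ x in φ ⁻¹' s, ENNReal.ofReal r * E x ∂ν
        = ENNReal.ofReal r * ∫⁻ x in φ ⁻¹' s, E x ∂ν := lintegral_const_mul _ hEmeas
      _ = ENNReal.ofReal r * ∫⁻ x in φ ⁻¹' s, h (φ x) ^ q / h x ^ q ∂ν := by rw [hE.2 s hs]
      _ = ∫⁻ x in φ ⁻¹' s, ENNReal.ofReal r * (h (φ x) ^ q / h x ^ q) ∂ν :=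
          (lintegral_const_mul _ hfq).symm
      _ ≤ ∫⁻ x in φ ⁻¹' s, (h (φ x) ^ p / h x ^ p + ENNReal.ofReal (r - 1)) ∂ν :=
          lintegral_mono_ae (ae_restrict_of_ae hptw)
      _ = ∫⁻ x in φ ⁻¹' s, h (φ x) ^ p / h x ^ p ∂ν
            + ENNReal.ofReal (r - 1) * ν (φ ⁻¹' s) := by
          rw [lintegral_add_right _ measurable_const, setLIntegral_const]
      _ = ∫⁻ x in φ ⁻¹' s, g (φ x) ∂ν + ENNReal.ofReal (r - 1) * ν (φ ⁻¹' s) := by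
          rw [hint s hs]
      _ = ∫⁻ x in φ ⁻¹' s, (g (φ x) + ENNReal.ofReal (r - 1)) ∂ν := by
          rw [lintegral_add_right _ measurable_const, setLIntegral_const]
  filter_upwards [hle, hEp1] with x h1 h2
  have hkey : ENNReal.ofReal r * E x ≤ ENNReal.ofReal r * 1 := by
    rw [mul_one]
    calc ENNReal.ofReal r * E x ≤ g (φ x) + ENNReal.ofReal (r - 1) := h1
      _ ≤ 1 + ENNReal.ofReal (r - 1) := by gcongr
      _ = ENNReal.ofReal r := by
          rw [← ENNReal.ofReal_one, ← ENNReal.ofReal_add zero_le_one (by linarith)]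
          norm_num
  exact (ENNReal.mul_le_mul_iff_right (ENNReal.ofReal_pos.mpr hr0).ne' ENNReal.ofReal_ne_top).mp hkey
end
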